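/- Fix distinguished states q_0, q_f ∈ Q. There is a polynomial p (independent of Q, N, t) such that for every N ≥ 1 and every input word t ∈ {0,1}^n with n ≤ 2^N, there exists an NFA over Γ with at most p(N + n + |Q|) states whose accepted language is exactly the set of words w over Γ satisfying at least one of: (a) w is not a well-formed sequence of configurations; (b) the state symbol occurring in the first configuration of w is not q_0; (c) the first configuration of w is not initialized with t, i.e., its head is not on cell 0, or its cells 0, …, n−1 do not carry the letters of t, or some cell among n, …, 2^N−1 does not carry 0; (d) the state symbol occurring in the last configuration of w is not q_f. -/

import Mathlib

namespace Paper

/-- The encoding alphabet `Γ = {0, 1, ▷, □, $, ↵, ;, :} ∪ Q`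
(nine kinds of symbols, all distinct). -/
inductive Sym (Q : Type) where
  | bit (b : Bool)   -- the two bit symbols 0 and 1
  | ltri             -- ▷
  | sq               -- □
  | dollar           -- $
  | newline          -- ↵
  | semi             -- ;
  | colon            -- :
  | state (q : Q)    -- the state symbols
  deriving DecidableEq

/-- Big-endian binary value of a bit string (most significant bit first). -/
def bval (x : List Bool) : ℕ :=
  x.foldl (fun acc b => 2 * acc + (if b then 1 else 0)) 0

/-- The `N`-bit big-endian binary representation `[i]` of `i`. -/
def binRep (N i : ℕ) : List Bool :=
  (List.range N).map (fun j => i.testBit (N - 1 - j))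

/-- A cell content: either a single bit, or a state symbol followed by a bit. -/
def IsCellContent {Q : Type} (x : List (Sym Q)) : Prop :=
  (∃ c : Bool, x = [Sym.bit c]) ∨ (∃ (q : Q) (c : Bool), x = [Sym.state q, Sym.bit c])

/-- The block `[i] : c ;` (resp. `[i] : q c ;`) encoding cell `i` with content
`c` when the head is not on cell `i` (resp. is on cell `i` in state `q`). -/
def cellBlock {Q : Type} (N i : ℕ) (st : Option Q) (c : Bool) : List (Sym Q) :=
  (binRep N i).map Sym.bit ++ [Sym.colon] ++
    (match st with | none => [] | some q => [Sym.state q]) ++ [Sym.bit c] ++ [Sym.semi]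

/-- A configuration of the machine: cell contents, control state, head position. -/
structure TMConfig (Q : Type) where
  cells : ℕ → Bool
  state : Q
  head : ℕ

/-- The word `$ B_0 B_1 ⋯ B_{2^N−1} ↵` encoding a configuration. -/
def encodeConfig {Q : Type} (N : ℕ) (cfg : TMConfig Q) : List (Sym Q) :=
  Sym.dollar ::
    ((List.range (2 ^ N)).map (fun i =>
      cellBlock N i (if i = cfg.head then some cfg.state else none) (cfg.cells i))).flatten
    ++ [Sym.newline]

/-- A well-formed configuration (with parameters `Q` and `N`). -/
def IsWFConfig {Q : Type} (N : ℕ) (w : List (Sym Q)) : Prop :=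
  ∃ cfg : TMConfig Q, cfg.head < 2 ^ N ∧ w = encodeConfig N cfg

/-- `w` is the encoding `▷ C_1 ⋯ C_k □` of the nonempty sequence `cfgs` of
configurations (each with its head on one of the `2^N` cells). -/
def SeqVia {Q : Type} (N : ℕ) (w : List (Sym Q)) (cfgs : List (TMConfig Q)) : Prop :=
  cfgs ≠ [] ∧ (∀ c ∈ cfgs, c.head < 2 ^ N) ∧
  w = Sym.ltri :: (cfgs.map (encodeConfig N)).flatten ++ [Sym.sq]

/-- A well-formed sequence of configurations. -/
def IsWFSeq {Q : Type} (N : ℕ) (w : List (Sym Q)) : Prop :=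
  ∃ cfgs, SeqVia N w cfgs

/-- The configuration is initialized with input `t`: head on cell `0`, cells
`0, …, n−1` carrying the letters of `t` and cells `n, …, 2^N−1` carrying `0`. -/
def InitializedWith {Q : Type} (t : List Bool) (N : ℕ) (c : TMConfig Q) : Prop :=
  c.head = 0 ∧ (∀ i, i < t.length → c.cells i = t.getD i false) ∧
  (∀ i, t.length ≤ i → i < 2 ^ N → c.cells i = false)

namespace NSC

inductive CSub : Type | pre | post | fin
deriving DecidableEq

inductive St (Q : Type) (N n : ℕ) : Type where
  | dead | init | done
  | boc (first : Bool) (lq : Option Q)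
  | addr (first : Bool) (lq : Option Q) (cnt : Fin (n+2)) (sn : Bool)
      (pb pa : Bool) (pos : Fin (N+1)) (b alb ala : Bool)
  | cell (first : Bool) (lq : Option Q) (cnt : Fin (n+2)) (sn : Bool)
      (sub : CSub) (b ala top : Bool)
  | eob (first : Bool) (lq : Option Q) (cnt : Fin (n+2)) (sn : Bool) (b ala top : Bool)
  deriving DecidableEq

variable {Q : Type}

open scoped Classical in
noncomputable def step (q0 qf : Q) (t : List Bool) (N j : ℕ) :
    St Q N t.length → Sym Q → St Q N t.length := fun s a =>
  match s, a with
  | .init, .ltri => .boc true none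
  | .boc first lq, .dollar =>
      .addr first lq ⟨0, Nat.succ_pos _⟩ false false false ⟨0, Nat.succ_pos _⟩ false true true
  | .boc first lq, .sq => if first = false ∧ lq = some qf then .done else .dead
  | .addr f lq cnt sn pb pa pos b alb ala, .bit c =>
      if h : (pos : ℕ) < N then
        .addr f lq cnt sn pb pa ⟨(pos : ℕ) + 1, by omega⟩
          (if (pos : ℕ) = j then c else b)
          (if (pos : ℕ) < j then alb && c else alb)
          (if j < (pos : ℕ) then ala && c else ala)
      else .dead
  | .addr f lq cnt sn pb pa pos b alb ala, .colon =>
      if (pos : ℕ) = N ∧ b = xor pb pa then .cell f lq cnt sn .pre b ala (b && alb && ala)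
      else .dead
  | .cell f lq cnt sn .pre b ala top, .state q =>
      if sn = false ∧ (f = true → ((cnt : ℕ) = 0 ∧ q = q0)) then
        .cell f (some q) cnt true .post b ala top
      else .dead
  | .cell f lq cnt sn .pre b ala top, .bit c =>
      if f = true → c = t.getD (cnt : ℕ) false then .cell f lq cnt sn .fin b ala top else .dead
  | .cell f lq cnt sn .post b ala top, .bit c =>
      if f = true → c = t.getD (cnt : ℕ) false then .cell f lq cnt sn .fin b ala top else .dead
  | .cell f lq cnt sn .fin b ala top, .semi =>
      .eob f lq ⟨min ((cnt : ℕ) + 1) (t.length + 1), by omega⟩ sn b ala top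
  | .eob f lq _ sn _ _ top, .newline =>
      if sn = true ∧ top = true then .boc false lq else .dead
  | .eob f lq cnt sn b ala top, .bit c =>
      if h : top = false ∧ 0 < N then
        .addr f lq cnt sn b ala ⟨1, by omega⟩
          (if 0 = j then c else false) (if 0 < j then c else true) true
      else .dead
  | _, _ => .dead


/-- Raw block: address bits, optional state symbol, cell bit. -/
structure RawB (Q : Type) where
  a : List Bool
  os : Option Q
  c : Bool

def osW {Q : Type} : Option Q → List (Sym Q)
  | none => []
  | some q => [Sym.state q]

def blockW {Q : Type} (B : RawB Q) : List (Sym Q) :=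
  B.a.map Sym.bit ++ Sym.colon :: (osW B.os ++ Sym.bit B.c :: [Sym.semi])

def cfgW {Q : Type} (C : List (RawB Q)) : List (Sym Q) :=
  Sym.dollar :: ((C.map blockW).flatten ++ [Sym.newline])

def rawW {Q : Type} (R : List (List (RawB Q))) : List (Sym Q) :=
  Sym.ltri :: ((R.map cfgW).flatten ++ [Sym.sq])

def bitJ {Q : Type} (j : ℕ) (B : RawB Q) : Bool := B.a.getD j false
def alaJ {Q : Type} (j : ℕ) (B : RawB Q) : Bool := (B.a.drop (j+1)).all id
def topB {Q : Type} (B : RawB Q) : Bool := B.a.all id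
def updLq {Q : Type} (lq : Option Q) (B : RawB Q) : Option Q :=
  match B.os with
  | none => lq
  | some q => some q

/-- Trace predicate: from an `eob` state with the given flags, the block list
`C` (followed by `↵`) is exactly what machine `j` tolerates, ending with
last-state `lq2`. -/
def BlocksOK {Q : Type} (q0 : Q) (t : List Bool) (N j : ℕ) :
    Bool → Option Q → ℕ → Bool → Bool → Bool → Bool → List (RawB Q) → Option Q → Prop
  | _, lq, _, sn, _, _, ptop, [], lq2 => ptop = true ∧ sn = true ∧ lq2 = lq
  | f, lq, cnt, sn, pb, pa, ptop, B :: C, lq2 =>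
      ptop = false ∧ B.a.length = N ∧ bitJ j B = xor pb pa ∧
      (∀ q, B.os = some q → sn = false ∧ (f = true → cnt = 0 ∧ q = q0)) ∧
      (f = true → B.c = t.getD cnt false) ∧
      BlocksOK q0 t N j f (updLq lq B) (min (cnt+1) (t.length+1)) (sn || B.os.isSome)
        (bitJ j B) (alaJ j B) (topB B) C lq2

def SeqOK {Q : Type} (q0 qf : Q) (t : List Bool) (N j : ℕ) :
    Bool → Option Q → List (List (RawB Q)) → Prop
  | f, lq, [] => f = false ∧ lq = some qf
  | f, lq, C :: R => ∃ lq2, BlocksOK q0 t N j f lq 0 false false false false C lq2 ∧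
      SeqOK q0 qf t N j false lq2 R

section Scan

variable (j : ℕ)

def scanb : ℕ → Bool → List Bool → Bool
  | _, b, [] => b
  | p, b, c :: x => scanb (p+1) (if p = j then c else b) x

def scanlb : ℕ → Bool → List Bool → Bool
  | _, al, [] => al
  | p, al, c :: x => scanlb (p+1) (if p < j then al && c else al) x

def scanla : ℕ → Bool → List Bool → Bool
  | _, al, [] => al
  | p, al, c :: x => scanla (p+1) (if j < p then al && c else al) x

lemma scanb_eq (x : List Bool) : ∀ p b, scanb j p b x =
    if p ≤ j ∧ j < p + x.length then x.getD (j-p) false else b := by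
  induction x with
  | nil =>
    intro p b
    rw [scanb, if_neg (by simp only [List.length_nil, Nat.add_zero]; omega)]
  | cons c x ih =>
    intro p b
    rw [scanb, ih, List.length_cons]
    rcases Nat.lt_trichotomy p j with h | h | h
    · by_cases h2 : j < p + 1 + x.length
      · rw [if_pos ⟨by omega, h2⟩, if_pos ⟨by omega, by omega⟩]
        have he : j - p = (j - (p+1)) + 1 := by omega
        rw [he]
        simp
      · rw [if_neg (by omega), if_neg (by omega), if_neg (by omega)]
    · subst h
      rw [if_neg (by omega), if_pos rfl, if_pos ⟨le_refl p, by omega⟩]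
      simp
    · rw [if_neg (by omega), if_neg (by omega), if_neg (by omega)]

lemma scanlb_eq (x : List Bool) : ∀ p al, scanlb j p al x =
    (al && ((x.take (j - p)).all id)) := by
  induction x with
  | nil => intro p al; simp [scanlb]
  | cons c x ih =>
    intro p al
    rw [scanlb, ih]
    by_cases h : p < j
    · have : j - p = (j - (p+1)) + 1 := by omega
      rw [this, if_pos h]
      simp [Bool.and_assoc]
    · have : j - p = 0 := by omega
      rw [this, if_neg h]
      have : j - (p+1) = 0 := by omega
      rw [this]
      simp

lemma scanla_eq (x : List Bool) : ∀ p al, scanla j p al x =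
    (al && ((x.drop (j + 1 - p)).all id)) := by
  induction x with
  | nil => intro p al; simp [scanla]
  | cons c x ih =>
    intro p al
    rw [scanla, ih]
    by_cases h : j < p
    · have : j + 1 - p = 0 := by omega
      rw [this, if_pos h]
      have : j + 1 - (p+1) = 0 := by omega
      rw [this]
      simp [Bool.and_assoc]
    · have : j + 1 - p = (j + 1 - (p+1)) + 1 := by omega
      rw [this, if_neg h]
      simp

lemma top_eq (a : List Bool) (hj : j < a.length) :
    (scanb j 0 false a && scanlb j 0 true a && scanla j 0 true a) = a.all id := by
  rw [scanb_eq, scanlb_eq, scanla_eq]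
  rw [if_pos ⟨Nat.zero_le _, by omega⟩]
  simp only [Nat.sub_zero, Bool.true_and]
  conv_rhs => rw [← List.take_append_drop j a]
  rw [List.all_append]
  have hd : a.drop j = a.getD j false :: a.drop (j+1) := by
    rw [List.getD_eq_getElem _ _ hj]
    rw [List.drop_eq_getElem_cons hj]
  rw [hd]
  simp [Bool.and_comm, Bool.and_assoc, Bool.and_left_comm]

end Scan


section Machine

variable {Q : Type} (q0 qf : Q) (t : List Bool) (N j : ℕ)

local notation "δ" => step q0 qf t N j

lemma step_dead (a : Sym Q) : δ St.dead a = St.dead := by cases a <;> rfl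

lemma step_done (a : Sym Q) : δ St.done a = St.dead := by cases a <;> rfl

lemma foldl_dead (v : List (Sym Q)) : v.foldl δ St.dead = St.dead := by
  induction v with
  | nil => rfl
  | cons a v ih => rw [List.foldl_cons, step_dead]; exact ih

lemma foldl_done_iff (v : List (Sym Q)) : v.foldl δ St.done = St.done ↔ v = [] := by
  cases v with
  | nil => simp
  | cons a v =>
    rw [List.foldl_cons, step_done, foldl_dead]
    simp

/-- decomposition helper for words of shape `bits ++ colon :: rest`. -/
lemma cons_eq_bits_colon {a : Sym Q} {v v' : List (Sym Q)} {x : List Bool}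
    (h : a :: v = x.map Sym.bit ++ Sym.colon :: v') :
    (∃ c x', a = Sym.bit c ∧ x = c :: x' ∧ v = x'.map Sym.bit ++ Sym.colon :: v') ∨
    (a = Sym.colon ∧ x = [] ∧ v = v') := by
  cases x with
  | nil => right; simp_all
  | cons c x' => left; exact ⟨c, x', by simp_all, rfl, by simp_all⟩

lemma foldl_addr_iff :
    ∀ (v : List (Sym Q)) (f : Bool) (lq : Option Q) (cnt : Fin (t.length+2)) (sn pb pa : Bool)
      (pos : Fin (N+1)) (b alb ala : Bool),
      v.foldl δ (St.addr f lq cnt sn pb pa pos b alb ala) = St.done ↔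
      ∃ (x : List Bool) (v' : List (Sym Q)),
        v = x.map Sym.bit ++ Sym.colon :: v' ∧ (pos : ℕ) + x.length = N ∧
        scanb j (pos : ℕ) b x = xor pb pa ∧
        v'.foldl δ (St.cell f lq cnt sn .pre (scanb j (pos : ℕ) b x)
          (scanla j (pos : ℕ) ala x)
          (scanb j (pos : ℕ) b x && scanlb j (pos : ℕ) alb x && scanla j (pos : ℕ) ala x))
          = St.done := by
  intro v
  induction v with
  | nil =>
    intro f lq cnt sn pb pa pos b alb ala
    constructor
    · intro h; exact absurd h (by simp)
    · rintro ⟨x, v', hv, -⟩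
      exact absurd hv (by simp)
  | cons a v ih =>
    intro f lq cnt sn pb pa pos b alb ala
    rw [List.foldl_cons]
    cases a with
    | bit c =>
      show (v.foldl δ (if h : (pos : ℕ) < N then _ else St.dead) = St.done) ↔ _
      by_cases h : (pos : ℕ) < N
      · rw [dif_pos h, ih]
        constructor
        · rintro ⟨x', v', hv, hlen, hxor, hrest⟩
          have hlen' : (pos : ℕ) + 1 + x'.length = N := hlen
          refine ⟨c :: x', v', by simp [hv], by simp only [List.length_cons]; omega, hxor, hrest⟩
        · rintro ⟨x, v', hv, hlen, hxor, hrest⟩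
          rcases cons_eq_bits_colon hv with ⟨c', x', hc, hx, hv'⟩ | ⟨hc, -, -⟩
          · cases hc; cases hx
            refine ⟨x', v', hv', show (pos : ℕ) + 1 + x'.length = N from ?_, hxor, hrest⟩
            simp only [List.length_cons] at hlen
            omega
          · exact absurd hc (by simp)
      · rw [dif_neg h, foldl_dead]
        constructor
        · intro hh; exact absurd hh (by simp)
        · rintro ⟨x, v', hv, hlen, -⟩
          rcases cons_eq_bits_colon hv with ⟨c', x', -, hx, -⟩ | ⟨hc, -, -⟩
          · exfalso; rw [hx] at hlen; simp at hlen; omega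
          · exact absurd hc (by simp)
    | colon =>
      show (v.foldl δ (if (pos : ℕ) = N ∧ b = xor pb pa then _ else St.dead) = St.done) ↔ _
      by_cases h : (pos : ℕ) = N ∧ b = xor pb pa
      · rw [if_pos h]
        constructor
        · intro hh
          exact ⟨[], v, by simp, by simpa using h.1, by simpa [scanb] using h.2,
            by simpa [scanb, scanlb, scanla] using hh⟩
        · rintro ⟨x, v', hv, hlen, hxor, hrest⟩
          rcases cons_eq_bits_colon hv with ⟨c', x', hc, -, -⟩ | ⟨-, hx, hv'⟩
          · exact absurd hc (by simp)
          · cases hx; cases hv'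
            simpa [scanb, scanlb, scanla] using hrest
      · rw [if_neg h, foldl_dead]
        constructor
        · intro hh; exact absurd hh (by simp)
        · rintro ⟨x, v', hv, hlen, hxor, -⟩
          rcases cons_eq_bits_colon hv with ⟨c', x', hc, -, -⟩ | ⟨-, hx, -⟩
          · exact absurd hc (by simp)
          · cases hx
            simp [scanb] at hxor hlen
            exact (h ⟨hlen, hxor⟩).elim
    | ltri =>
      rw [show δ (St.addr f lq cnt sn pb pa pos b alb ala) Sym.ltri = St.dead from rfl, foldl_dead]
      constructor
      · intro hh; exact absurd hh (by simp)
      · rintro ⟨x, v', hv, -⟩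
        rcases cons_eq_bits_colon hv with ⟨c', x', hc, -, -⟩ | ⟨hc, -, -⟩ <;>
          exact absurd hc (by simp)
    | sq =>
      rw [show δ (St.addr f lq cnt sn pb pa pos b alb ala) Sym.sq = St.dead from rfl, foldl_dead]
      constructor
      · intro hh; exact absurd hh (by simp)
      · rintro ⟨x, v', hv, -⟩
        rcases cons_eq_bits_colon hv with ⟨c', x', hc, -, -⟩ | ⟨hc, -, -⟩ <;>
          exact absurd hc (by simp)
    | dollar =>
      rw [show δ (St.addr f lq cnt sn pb pa pos b alb ala) Sym.dollar = St.dead from rfl, foldl_dead]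
      constructor
      · intro hh; exact absurd hh (by simp)
      · rintro ⟨x, v', hv, -⟩
        rcases cons_eq_bits_colon hv with ⟨c', x', hc, -, -⟩ | ⟨hc, -, -⟩ <;>
          exact absurd hc (by simp)
    | newline =>
      rw [show δ (St.addr f lq cnt sn pb pa pos b alb ala) Sym.newline = St.dead from rfl, foldl_dead]
      constructor
      · intro hh; exact absurd hh (by simp)
      · rintro ⟨x, v', hv, -⟩
        rcases cons_eq_bits_colon hv with ⟨c', x', hc, -, -⟩ | ⟨hc, -, -⟩ <;>
          exact absurd hc (by simp)
    | semi =>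
      rw [show δ (St.addr f lq cnt sn pb pa pos b alb ala) Sym.semi = St.dead from rfl, foldl_dead]
      constructor
      · intro hh; exact absurd hh (by simp)
      · rintro ⟨x, v', hv, -⟩
        rcases cons_eq_bits_colon hv with ⟨c', x', hc, -, -⟩ | ⟨hc, -, -⟩ <;>
          exact absurd hc (by simp)
    | state q =>
      rw [show δ (St.addr f lq cnt sn pb pa pos b alb ala) (Sym.state q) = St.dead from rfl, foldl_dead]
      constructor
      · intro hh; exact absurd hh (by simp)
      · rintro ⟨x, v', hv, -⟩
        rcases cons_eq_bits_colon hv with ⟨c', x', hc, -, -⟩ | ⟨hc, -, -⟩ <;>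
          exact absurd hc (by simp)


def updO {Q : Type} (lq os : Option Q) : Option Q :=
  match os with
  | none => lq
  | some q => some q

open scoped Classical in
lemma foldl_cell_iff :
    ∀ (v : List (Sym Q)) (f : Bool) (lq : Option Q) (cnt : Fin (t.length+2)) (sn b ala top : Bool),
      v.foldl δ (St.cell f lq cnt sn .pre b ala top) = St.done ↔
      ∃ (os : Option Q) (cb : Bool) (v' : List (Sym Q)),
        v = osW os ++ Sym.bit cb :: Sym.semi :: v' ∧
        (∀ q, os = some q → sn = false ∧ (f = true → (cnt : ℕ) = 0 ∧ q = q0)) ∧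
        (f = true → cb = t.getD (cnt : ℕ) false) ∧
        v'.foldl δ (St.eob f (updO lq os) ⟨min ((cnt : ℕ)+1) (t.length+1), by omega⟩
          (sn || os.isSome) b ala top) = St.done := by
  intro v f lq cnt sn b ala top
  constructor
  · intro h
    match v, h with
    | .nil, h => exact absurd h (by simp)
    | .cons a v, h =>
      rw [List.foldl_cons] at h
      match a with
      | Sym.bit c =>
        rw [show δ (St.cell f lq cnt sn .pre b ala top) (Sym.bit c) =
            (if f = true → c = t.getD (cnt : ℕ) false then St.cell f lq cnt sn .fin b ala top
             else St.dead) from rfl] at h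
        by_cases hc : f = true → c = t.getD (cnt : ℕ) false
        · rw [if_pos hc] at h
          match v, h with
          | .nil, h => exact absurd h (by simp)
          | .cons a2 v2, h =>
            rw [List.foldl_cons] at h
            match a2 with
            | Sym.semi =>
              rw [show δ (St.cell f lq cnt sn .fin b ala top) Sym.semi =
                  St.eob f lq ⟨min ((cnt : ℕ)+1) (t.length+1), by omega⟩ sn b ala top from rfl] at h
              refine ⟨none, c, v2, by simp [osW], by simp, hc, ?_⟩
              simpa [updO] using h
            | Sym.bit c2 => rw [show δ (St.cell f lq cnt sn .fin b ala top) (Sym.bit c2) = St.dead from rfl, foldl_dead] at h; exact absurd h (by simp)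
            | Sym.ltri => rw [show δ (St.cell f lq cnt sn .fin b ala top) Sym.ltri = St.dead from rfl, foldl_dead] at h; exact absurd h (by simp)
            | Sym.sq => rw [show δ (St.cell f lq cnt sn .fin b ala top) Sym.sq = St.dead from rfl, foldl_dead] at h; exact absurd h (by simp)
            | Sym.dollar => rw [show δ (St.cell f lq cnt sn .fin b ala top) Sym.dollar = St.dead from rfl, foldl_dead] at h; exact absurd h (by simp)
            | Sym.newline => rw [show δ (St.cell f lq cnt sn .fin b ala top) Sym.newline = St.dead from rfl, foldl_dead] at h; exact absurd h (by simp)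
            | Sym.colon => rw [show δ (St.cell f lq cnt sn .fin b ala top) Sym.colon = St.dead from rfl, foldl_dead] at h; exact absurd h (by simp)
            | Sym.state q => rw [show δ (St.cell f lq cnt sn .fin b ala top) (Sym.state q) = St.dead from rfl, foldl_dead] at h; exact absurd h (by simp)
        · rw [if_neg hc, foldl_dead] at h; exact absurd h (by simp)
      | Sym.state q =>
        rw [show δ (St.cell f lq cnt sn .pre b ala top) (Sym.state q) =
            (if sn = false ∧ (f = true → ((cnt : ℕ) = 0 ∧ q = q0)) then
              St.cell f (some q) cnt true .post b ala top else St.dead) from rfl] at h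
        by_cases hq : sn = false ∧ (f = true → ((cnt : ℕ) = 0 ∧ q = q0))
        · rw [if_pos hq] at h
          match v, h with
          | .nil, h => exact absurd h (by simp)
          | .cons a2 v2, h =>
            rw [List.foldl_cons] at h
            match a2 with
            | Sym.bit c =>
              rw [show δ (St.cell f (some q) cnt true .post b ala top) (Sym.bit c) =
                  (if f = true → c = t.getD (cnt : ℕ) false then
                    St.cell f (some q) cnt true .fin b ala top else St.dead) from rfl] at h
              by_cases hc : f = true → c = t.getD (cnt : ℕ) false
              · rw [if_pos hc] at h
                match v2, h with
                | .nil, h => exact absurd h (by simp)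
                | .cons a3 v3, h =>
                  rw [List.foldl_cons] at h
                  match a3 with
                  | Sym.semi =>
                    rw [show δ (St.cell f (some q) cnt true .fin b ala top) Sym.semi =
                        St.eob f (some q) ⟨min ((cnt : ℕ)+1) (t.length+1), by omega⟩ true b ala top from rfl] at h
                    refine ⟨some q, c, v3, by simp [osW], ?_, hc, ?_⟩
                    · rintro q' hq'
                      cases hq'
                      exact hq
                    · simpa [updO] using h
                  | Sym.bit c2 => rw [show δ (St.cell f (some q) cnt true .fin b ala top) (Sym.bit c2) = St.dead from rfl, foldl_dead] at h; exact absurd h (by simp)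
                  | Sym.ltri => rw [show δ (St.cell f (some q) cnt true .fin b ala top) Sym.ltri = St.dead from rfl, foldl_dead] at h; exact absurd h (by simp)
                  | Sym.sq => rw [show δ (St.cell f (some q) cnt true .fin b ala top) Sym.sq = St.dead from rfl, foldl_dead] at h; exact absurd h (by simp)
                  | Sym.dollar => rw [show δ (St.cell f (some q) cnt true .fin b ala top) Sym.dollar = St.dead from rfl, foldl_dead] at h; exact absurd h (by simp)
                  | Sym.newline => rw [show δ (St.cell f (some q) cnt true .fin b ala top) Sym.newline = St.dead from rfl, foldl_dead] at h; exact absurd h (by simp)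
                  | Sym.colon => rw [show δ (St.cell f (some q) cnt true .fin b ala top) Sym.colon = St.dead from rfl, foldl_dead] at h; exact absurd h (by simp)
                  | Sym.state q2 => rw [show δ (St.cell f (some q) cnt true .fin b ala top) (Sym.state q2) = St.dead from rfl, foldl_dead] at h; exact absurd h (by simp)
              · rw [if_neg hc, foldl_dead] at h; exact absurd h (by simp)
            | Sym.semi => rw [show δ (St.cell f (some q) cnt true .post b ala top) Sym.semi = St.dead from rfl, foldl_dead] at h; exact absurd h (by simp)
            | Sym.ltri => rw [show δ (St.cell f (some q) cnt true .post b ala top) Sym.ltri = St.dead from rfl, foldl_dead] at h; exact absurd h (by simp)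
            | Sym.sq => rw [show δ (St.cell f (some q) cnt true .post b ala top) Sym.sq = St.dead from rfl, foldl_dead] at h; exact absurd h (by simp)
            | Sym.dollar => rw [show δ (St.cell f (some q) cnt true .post b ala top) Sym.dollar = St.dead from rfl, foldl_dead] at h; exact absurd h (by simp)
            | Sym.newline => rw [show δ (St.cell f (some q) cnt true .post b ala top) Sym.newline = St.dead from rfl, foldl_dead] at h; exact absurd h (by simp)
            | Sym.colon => rw [show δ (St.cell f (some q) cnt true .post b ala top) Sym.colon = St.dead from rfl, foldl_dead] at h; exact absurd h (by simp)
            | Sym.state q2 => rw [show δ (St.cell f (some q) cnt true .post b ala top) (Sym.state q2) = St.dead from rfl, foldl_dead] at h; exact absurd h (by simp)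
        · rw [if_neg hq, foldl_dead] at h; exact absurd h (by simp)
      | Sym.ltri => rw [show δ (St.cell f lq cnt sn .pre b ala top) Sym.ltri = St.dead from rfl, foldl_dead] at h; exact absurd h (by simp)
      | Sym.sq => rw [show δ (St.cell f lq cnt sn .pre b ala top) Sym.sq = St.dead from rfl, foldl_dead] at h; exact absurd h (by simp)
      | Sym.dollar => rw [show δ (St.cell f lq cnt sn .pre b ala top) Sym.dollar = St.dead from rfl, foldl_dead] at h; exact absurd h (by simp)
      | Sym.newline => rw [show δ (St.cell f lq cnt sn .pre b ala top) Sym.newline = St.dead from rfl, foldl_dead] at h; exact absurd h (by simp)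
      | Sym.colon => rw [show δ (St.cell f lq cnt sn .pre b ala top) Sym.colon = St.dead from rfl, foldl_dead] at h; exact absurd h (by simp)
      | Sym.semi => rw [show δ (St.cell f lq cnt sn .pre b ala top) Sym.semi = St.dead from rfl, foldl_dead] at h; exact absurd h (by simp)
  · rintro ⟨os, cb, v', hv, hos, hcb, hrest⟩
    match os, hv with
    | none, hv =>
      subst hv
      simp only [osW, List.nil_append, List.foldl_cons]
      rw [show δ (St.cell f lq cnt sn .pre b ala top) (Sym.bit cb) =
          (if f = true → cb = t.getD (cnt : ℕ) false then St.cell f lq cnt sn .fin b ala top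
           else St.dead) from rfl, if_pos hcb]
      rw [show δ (St.cell f lq cnt sn .fin b ala top) Sym.semi =
          St.eob f lq ⟨min ((cnt : ℕ)+1) (t.length+1), by omega⟩ sn b ala top from rfl]
      simpa [updO] using hrest
    | some q, hv =>
      subst hv
      simp only [osW, List.cons_append, List.nil_append, List.foldl_cons]
      rw [show δ (St.cell f lq cnt sn .pre b ala top) (Sym.state q) =
          (if sn = false ∧ (f = true → ((cnt : ℕ) = 0 ∧ q = q0)) then
            St.cell f (some q) cnt true .post b ala top else St.dead) from rfl,
        if_pos (hos q rfl)]
      rw [show δ (St.cell f (some q) cnt true .post b ala top) (Sym.bit cb) =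
          (if f = true → cb = t.getD (cnt : ℕ) false then
            St.cell f (some q) cnt true .fin b ala top else St.dead) from rfl, if_pos hcb]
      rw [show δ (St.cell f (some q) cnt true .fin b ala top) Sym.semi =
          St.eob f (some q) ⟨min ((cnt : ℕ)+1) (t.length+1), by omega⟩ true b ala top from rfl]
      simpa [updO] using hrest


lemma blockW_head_cases {C : List (RawB Q)} {v' v₁ : List (Sym Q)} {a : Sym Q}
    (h : a :: v₁ = (C.map blockW).flatten ++ Sym.newline :: v') :
    (C = [] ∧ a = Sym.newline ∧ v₁ = v') ∨
    (∃ B C', C = B :: C' ∧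
      ((∃ c x', B.a = c :: x' ∧ a = Sym.bit c) ∨ (B.a = [] ∧ a = Sym.colon))) := by
  cases C with
  | nil => left; simp_all
  | cons B C' =>
    right
    refine ⟨B, C', rfl, ?_⟩
    rcases hBa : B.a with _ | ⟨c, x'⟩
    · right
      refine ⟨rfl, ?_⟩
      simp only [List.map_cons, List.flatten_cons, blockW, hBa, List.map_nil,
        List.nil_append, List.cons_append] at h
      exact (List.cons_eq_cons.mp h).1
    · left
      refine ⟨c, x', rfl, ?_⟩
      simp only [List.map_cons, List.flatten_cons, blockW, hBa, List.map_cons,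
        List.cons_append, List.append_assoc] at h
      exact (List.cons_eq_cons.mp h).1

lemma scan_spec (hj : j < N) {x : List Bool} (hx : x.length = N) (os : Option Q) (cb : Bool) :
    scanb j 0 false x = bitJ j ⟨x, os, cb⟩ ∧
    scanla j 0 true x = alaJ j ⟨x, os, cb⟩ ∧
    (scanb j 0 false x && scanlb j 0 true x && scanla j 0 true x) = topB ⟨x, os, cb⟩ := by
  refine ⟨?_, ?_, ?_⟩
  · rw [scanb_eq, if_pos ⟨Nat.zero_le _, by omega⟩]
    simp [bitJ]
  · rw [scanla_eq]
    simp [alaJ]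
  · rw [top_eq j x (by omega)]
    rfl

open scoped Classical in
lemma addr0_eob_iff (hj : j < N) :
    ∀ (k : ℕ) (v : List (Sym Q)), v.length ≤ k →
      ((∀ (f : Bool) (lq : Option Q) (cnt : Fin (t.length+2)) (sn pb pa : Bool),
        v.foldl δ (St.addr f lq cnt sn pb pa ⟨0, Nat.succ_pos N⟩ false true true) = St.done ↔
        ∃ C lq2 v', v = (C.map blockW).flatten ++ Sym.newline :: v' ∧
          BlocksOK q0 t N j f lq (cnt : ℕ) sn pb pa false C lq2 ∧
          v'.foldl δ (St.boc false lq2) = St.done) ∧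
      (∀ (f : Bool) (lq : Option Q) (cnt : Fin (t.length+2)) (sn b ala top : Bool),
        v.foldl δ (St.eob f lq cnt sn b ala top) = St.done ↔
        ∃ C lq2 v', v = (C.map blockW).flatten ++ Sym.newline :: v' ∧
          BlocksOK q0 t N j f lq (cnt : ℕ) sn b ala top C lq2 ∧
          v'.foldl δ (St.boc false lq2) = St.done)) := by
  intro k
  induction k using Nat.strong_induction_on with
  | _ k SIH =>
  intro v hvk
  have h0 : ((⟨0, Nat.succ_pos N⟩ : Fin (N+1)) : ℕ) = 0 := rfl
  have Haddr : ∀ (f : Bool) (lq : Option Q) (cnt : Fin (t.length+2)) (sn pb pa : Bool),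
      v.foldl δ (St.addr f lq cnt sn pb pa ⟨0, Nat.succ_pos N⟩ false true true) = St.done ↔
      ∃ C lq2 v', v = (C.map blockW).flatten ++ Sym.newline :: v' ∧
        BlocksOK q0 t N j f lq (cnt : ℕ) sn pb pa false C lq2 ∧
        v'.foldl δ (St.boc false lq2) = St.done := by
    intro f lq cnt sn pb pa
    rw [foldl_addr_iff, h0]
    constructor
    · rintro ⟨x, v1, hv1, hlen, hxor, hcell⟩
      rw [foldl_cell_iff] at hcell
      obtain ⟨os, cb, v2, hv2, hos, hcb, heob⟩ := hcell
      have hxlen : x.length = N := by omega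
      obtain ⟨hsb, hsa, hst⟩ := scan_spec N j hj hxlen os cb
      have hlt : v2.length < k := by
        subst hv2; subst hv1
        simp only [List.length_append, List.length_map, List.length_cons] at hvk
        omega
      rw [hst, hsb, hsa] at heob
      rw [(SIH v2.length hlt v2 le_rfl).2] at heob
      obtain ⟨C', lq2, v3, hv3, hrec, hboc⟩ := heob
      refine ⟨⟨x, os, cb⟩ :: C', lq2, v3, ?_, ?_, hboc⟩
      · subst hv3; subst hv2; subst hv1
        simp [blockW, List.append_assoc]
      · exact ⟨rfl, hxlen, by rw [← hsb]; exact hxor, hos, hcb, hrec⟩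
    · rintro ⟨C, lq2, v', hv, hB, hboc⟩
      match C, hB with
      | [], hB => exact absurd hB.1 (by simp)
      | B :: C', hB =>
        obtain ⟨-, hlen, hbit, hos, hcb, hrec⟩ := hB
        obtain ⟨hsb, hsa, hst⟩ := scan_spec N j hj hlen B.os B.c
        refine ⟨B.a, osW B.os ++ Sym.bit B.c :: Sym.semi ::
          ((C'.map blockW).flatten ++ Sym.newline :: v'), ?_, by omega, ?_, ?_⟩
        · rw [hv]; simp [blockW, List.append_assoc]
        · rw [hsb]; exact hbit
        · rw [foldl_cell_iff]
          refine ⟨B.os, B.c, _, rfl, hos, hcb, ?_⟩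
          have hlt : ((C'.map blockW).flatten ++ Sym.newline :: v').length < k := by
            rw [hv] at hvk
            simp only [List.map_cons, List.flatten_cons, List.append_assoc, blockW,
              List.length_append, List.length_cons, List.length_map] at hvk ⊢
            omega
          rw [(SIH _ hlt _ le_rfl).2]
          refine ⟨C', lq2, v', rfl, ?_, hboc⟩
          rw [hst, hsb, hsa]
          exact hrec
  refine ⟨Haddr, ?_⟩
  intro f lq cnt sn b ala top
  cases v with
  | nil =>
    constructor
    · intro h; exact absurd h (by simp)
    · rintro ⟨C, lq2, v', hv, -, -⟩
      exact absurd hv.symm (by simp)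
  | cons a v₁ =>
    rw [List.foldl_cons]
    cases a with
    | newline =>
      show (v₁.foldl δ (if sn = true ∧ top = true then St.boc false lq else St.dead) = St.done) ↔ _
      by_cases hc : sn = true ∧ top = true
      · rw [if_pos hc]
        constructor
        · intro h
          exact ⟨[], lq, v₁, by simp, ⟨hc.2, hc.1, rfl⟩, h⟩
        · rintro ⟨C, lq2, v', hv, hB, hboc⟩
          rcases blockW_head_cases hv with ⟨hC, -, hv'⟩ | ⟨B, C', hC, hcase⟩
          · subst hC
            obtain ⟨-, -, hlq⟩ := hB
            subst hlq; subst hv'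
            exact hboc
          · exfalso
            rcases hcase with ⟨c, x', -, ha⟩ | ⟨-, ha⟩ <;> simp at ha
      · rw [if_neg hc, foldl_dead]
        constructor
        · intro h; exact absurd h (by simp)
        · rintro ⟨C, lq2, v', hv, hB, -⟩
          rcases blockW_head_cases hv with ⟨hC, -, -⟩ | ⟨B, C', hC, hcase⟩
          · subst hC
            exact absurd ⟨hB.2.1, hB.1⟩ hc
          · exfalso
            rcases hcase with ⟨c, x', -, ha⟩ | ⟨-, ha⟩ <;> simp at ha
    | bit c =>
      show (v₁.foldl δ (if h : top = false ∧ 0 < N then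
          St.addr f lq cnt sn b ala ⟨1, by omega⟩ (if 0 = j then c else false)
            (if 0 < j then c else true) true else St.dead) = St.done) ↔ _
      have h0N : (0 : ℕ) < N := lt_of_le_of_lt (Nat.zero_le j) hj
      by_cases htop : top = false
      · subst htop
        rw [dif_pos ⟨rfl, h0N⟩]
        have hstep : St.addr f lq cnt sn b ala (⟨1, by omega⟩ : Fin (N+1))
              (if 0 = j then c else false) (if 0 < j then c else true) true
            = δ (St.addr f lq cnt sn b ala ⟨0, Nat.succ_pos N⟩ false true true) (Sym.bit c) := by
          show _ = if h : ((⟨0, Nat.succ_pos N⟩ : Fin (N+1)) : ℕ) < N then _ else _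
          rw [dif_pos (show ((⟨0, Nat.succ_pos N⟩ : Fin (N+1)) : ℕ) < N from h0N)]
          simp
        rw [hstep, ← List.foldl_cons]
        exact Haddr f lq cnt sn b ala
      · have htop' : top = true := by
          cases top
          · exact absurd rfl htop
          · rfl
        subst htop'
        rw [dif_neg (by simp)]
        rw [foldl_dead]
        constructor
        · intro h; exact absurd h (by simp)
        · rintro ⟨C, lq2, v', hv, hB, -⟩
          rcases blockW_head_cases hv with ⟨-, ha, -⟩ | ⟨B, C', hC, -⟩
          · simp at ha
          · subst hC
            exact absurd hB.1 (by simp)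
    | colon =>
      rw [show δ (St.eob f lq cnt sn b ala top) Sym.colon = St.dead from rfl, foldl_dead]
      constructor
      · intro h; exact absurd h (by simp)
      · rintro ⟨C, lq2, v', hv, hB, -⟩
        rcases blockW_head_cases hv with ⟨-, ha, -⟩ | ⟨B, C', hC, hcase⟩
        · simp at ha
        · rcases hcase with ⟨c, x', -, ha⟩ | ⟨hBa, -⟩
          · simp at ha
          · subst hC
            have hlen := hB.2.1
            rw [hBa] at hlen
            simp at hlen
            omega
    | ltri =>
      rw [show δ (St.eob f lq cnt sn b ala top) Sym.ltri = St.dead from rfl, foldl_dead]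
      constructor
      · intro h; exact absurd h (by simp)
      · rintro ⟨C, lq2, v', hv, hB, -⟩
        rcases blockW_head_cases hv with ⟨-, ha, -⟩ | ⟨B, C', hC, hcase⟩
        · simp at ha
        · rcases hcase with ⟨c, x', -, ha⟩ | ⟨-, ha⟩ <;> simp at ha
    | sq =>
      rw [show δ (St.eob f lq cnt sn b ala top) Sym.sq = St.dead from rfl, foldl_dead]
      constructor
      · intro h; exact absurd h (by simp)
      · rintro ⟨C, lq2, v', hv, hB, -⟩
        rcases blockW_head_cases hv with ⟨-, ha, -⟩ | ⟨B, C', hC, hcase⟩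
        · simp at ha
        · rcases hcase with ⟨c, x', -, ha⟩ | ⟨-, ha⟩ <;> simp at ha
    | dollar =>
      rw [show δ (St.eob f lq cnt sn b ala top) Sym.dollar = St.dead from rfl, foldl_dead]
      constructor
      · intro h; exact absurd h (by simp)
      · rintro ⟨C, lq2, v', hv, hB, -⟩
        rcases blockW_head_cases hv with ⟨-, ha, -⟩ | ⟨B, C', hC, hcase⟩
        · simp at ha
        · rcases hcase with ⟨c, x', -, ha⟩ | ⟨-, ha⟩ <;> simp at ha
    | semi =>
      rw [show δ (St.eob f lq cnt sn b ala top) Sym.semi = St.dead from rfl, foldl_dead]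
      constructor
      · intro h; exact absurd h (by simp)
      · rintro ⟨C, lq2, v', hv, hB, -⟩
        rcases blockW_head_cases hv with ⟨-, ha, -⟩ | ⟨B, C', hC, hcase⟩
        · simp at ha
        · rcases hcase with ⟨c, x', -, ha⟩ | ⟨-, ha⟩ <;> simp at ha
    | state q =>
      rw [show δ (St.eob f lq cnt sn b ala top) (Sym.state q) = St.dead from rfl, foldl_dead]
      constructor
      · intro h; exact absurd h (by simp)
      · rintro ⟨C, lq2, v', hv, hB, -⟩
        rcases blockW_head_cases hv with ⟨-, ha, -⟩ | ⟨B, C', hC, hcase⟩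
        · simp at ha
        · rcases hcase with ⟨c, x', -, ha⟩ | ⟨-, ha⟩ <;> simp at ha


lemma cfgW_head_cases {R : List (List (RawB Q))} {v₁ : List (Sym Q)} {a : Sym Q}
    (h : a :: v₁ = (R.map cfgW).flatten ++ [Sym.sq]) :
    (R = [] ∧ a = Sym.sq ∧ v₁ = []) ∨
    (∃ C R', R = C :: R' ∧ a = Sym.dollar ∧
      v₁ = ((C.map blockW).flatten ++ [Sym.newline]) ++ ((R'.map cfgW).flatten ++ [Sym.sq])) := by
  cases R with
  | nil =>
    left
    simp only [List.map_nil, List.flatten_nil, List.nil_append] at h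
    exact ⟨rfl, (List.cons_eq_cons.mp h).1, (List.cons_eq_cons.mp h).2⟩
  | cons C R' =>
    right
    refine ⟨C, R', rfl, ?_, ?_⟩
    · simp only [List.map_cons, List.flatten_cons, cfgW, List.cons_append, List.append_assoc] at h
      exact (List.cons_eq_cons.mp h).1
    · simp only [List.map_cons, List.flatten_cons, cfgW, List.cons_append, List.append_assoc] at h
      simpa using (List.cons_eq_cons.mp h).2

open scoped Classical in
lemma foldl_boc_iff (hj : j < N) (v : List (Sym Q)) (f : Bool) (lq : Option Q) :
    v.foldl δ (St.boc f lq) = St.done ↔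
      (f = false ∧ lq = some qf ∧ v = [Sym.sq]) ∨
      (∃ C lq2 v', v = Sym.dollar :: ((C.map blockW).flatten ++ Sym.newline :: v') ∧
        BlocksOK q0 t N j f lq 0 false false false false C lq2 ∧
        v'.foldl δ (St.boc false lq2) = St.done) := by
  cases v with
  | nil =>
    constructor
    · intro h; exact absurd h (by simp)
    · rintro (⟨-, -, hv⟩ | ⟨C, lq2, v', hv, -, -⟩) <;> simp at hv
  | cons a v₁ =>
    rw [List.foldl_cons]
    cases a with
    | sq =>
      show (v₁.foldl δ (if f = false ∧ lq = some qf then St.done else St.dead) = St.done) ↔ _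
      by_cases hc : f = false ∧ lq = some qf
      · rw [if_pos hc, foldl_done_iff]
        constructor
        · intro h; exact Or.inl ⟨hc.1, hc.2, by rw [h]⟩
        · rintro (⟨-, -, hv⟩ | ⟨C, lq2, v', hv, -, -⟩)
          · exact (List.cons_eq_cons.mp hv).2
          · exact absurd (List.cons_eq_cons.mp hv).1 (by simp)
      · rw [if_neg hc, foldl_dead]
        constructor
        · intro h; exact absurd h (by simp)
        · rintro (⟨h1, h2, -⟩ | ⟨C, lq2, v', hv, -, -⟩)
          · exact absurd ⟨h1, h2⟩ hc
          · exact absurd (List.cons_eq_cons.mp hv).1 (by simp)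
    | dollar =>
      rw [show δ (St.boc f lq) Sym.dollar = St.addr f lq ⟨0, Nat.succ_pos _⟩ false false false
          ⟨0, Nat.succ_pos _⟩ false true true from rfl]
      rw [(addr0_eob_iff q0 qf t N j hj v₁.length v₁ le_rfl).1 f lq ⟨0, Nat.succ_pos _⟩ false false false]
      constructor
      · rintro ⟨C, lq2, v', hv, hB, hboc⟩
        exact Or.inr ⟨C, lq2, v', by rw [hv], hB, hboc⟩
      · rintro (⟨-, -, hv⟩ | ⟨C, lq2, v', hv, hB, hboc⟩)
        · simp at hv
        · exact ⟨C, lq2, v', (List.cons_eq_cons.mp hv).2, hB, hboc⟩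
    | ltri =>
      rw [show δ (St.boc f lq) Sym.ltri = St.dead from rfl, foldl_dead]
      constructor
      · intro h; exact absurd h (by simp)
      · rintro (⟨-, -, hv⟩ | ⟨C, lq2, v', hv, -, -⟩)
        · simp at hv
        · exact absurd (List.cons_eq_cons.mp hv).1 (by simp)
    | bit c =>
      rw [show δ (St.boc f lq) (Sym.bit c) = St.dead from rfl, foldl_dead]
      constructor
      · intro h; exact absurd h (by simp)
      · rintro (⟨-, -, hv⟩ | ⟨C, lq2, v', hv, -, -⟩)
        · simp at hv
        · exact absurd (List.cons_eq_cons.mp hv).1 (by simp)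
    | newline =>
      rw [show δ (St.boc f lq) Sym.newline = St.dead from rfl, foldl_dead]
      constructor
      · intro h; exact absurd h (by simp)
      · rintro (⟨-, -, hv⟩ | ⟨C, lq2, v', hv, -, -⟩)
        · simp at hv
        · exact absurd (List.cons_eq_cons.mp hv).1 (by simp)
    | semi =>
      rw [show δ (St.boc f lq) Sym.semi = St.dead from rfl, foldl_dead]
      constructor
      · intro h; exact absurd h (by simp)
      · rintro (⟨-, -, hv⟩ | ⟨C, lq2, v', hv, -, -⟩)
        · simp at hv
        · exact absurd (List.cons_eq_cons.mp hv).1 (by simp)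
    | colon =>
      rw [show δ (St.boc f lq) Sym.colon = St.dead from rfl, foldl_dead]
      constructor
      · intro h; exact absurd h (by simp)
      · rintro (⟨-, -, hv⟩ | ⟨C, lq2, v', hv, -, -⟩)
        · simp at hv
        · exact absurd (List.cons_eq_cons.mp hv).1 (by simp)
    | state q =>
      rw [show δ (St.boc f lq) (Sym.state q) = St.dead from rfl, foldl_dead]
      constructor
      · intro h; exact absurd h (by simp)
      · rintro (⟨-, -, hv⟩ | ⟨C, lq2, v', hv, -, -⟩)
        · simp at hv
        · exact absurd (List.cons_eq_cons.mp hv).1 (by simp)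

lemma foldl_seq_iff (hj : j < N) :
    ∀ (k : ℕ) (v : List (Sym Q)), v.length ≤ k → ∀ (f : Bool) (lq : Option Q),
      v.foldl δ (St.boc f lq) = St.done ↔
      ∃ R, v = (R.map cfgW).flatten ++ [Sym.sq] ∧ SeqOK q0 qf t N j f lq R := by
  intro k
  induction k using Nat.strong_induction_on with
  | _ k SIH =>
  intro v hvk f lq
  rw [foldl_boc_iff q0 qf t N j hj]
  constructor
  · rintro (⟨hf, hlq, hv⟩ | ⟨C, lq2, v', hv, hB, hboc⟩)
    · exact ⟨[], by simpa using hv, hf, hlq⟩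
    · have hlt : v'.length < k := by
        rw [hv] at hvk
        simp only [List.length_cons, List.length_append] at hvk
        omega
      obtain ⟨R', hv', hS⟩ := ((SIH v'.length hlt v' le_rfl) false lq2).mp hboc
      refine ⟨C :: R', ?_, lq2, hB, hS⟩
      rw [hv, hv']
      simp [cfgW, List.append_assoc]
  · rintro ⟨R, hv, hS⟩
    cases R with
    | nil => exact Or.inl ⟨hS.1, hS.2, by simpa using hv⟩
    | cons C R' =>
      obtain ⟨lq2, hB, hS'⟩ := hS
      refine Or.inr ⟨C, lq2, (R'.map cfgW).flatten ++ [Sym.sq], ?_, hB, ?_⟩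
      · rw [hv]; simp [cfgW, List.append_assoc]
      · have hlt : ((R'.map cfgW).flatten ++ [Sym.sq]).length < k := by
          rw [hv] at hvk
          simp only [List.map_cons, List.flatten_cons, cfgW, List.length_append,
            List.length_cons, List.cons_append, List.append_assoc] at hvk ⊢
          omega
        exact ((SIH _ hlt _ le_rfl) false lq2).mpr ⟨R', rfl, hS'⟩

open scoped Classical in
lemma foldl_init_iff (hj : j < N) (w : List (Sym Q)) :
    w.foldl δ St.init = St.done ↔
      ∃ R, w = rawW R ∧ SeqOK q0 qf t N j true none R := by
  cases w with
  | nil =>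
    constructor
    · intro h; exact absurd h (by simp)
    · rintro ⟨R, hv, -⟩; simp [rawW] at hv
  | cons a w₁ =>
    rw [List.foldl_cons]
    cases a with
    | ltri =>
      rw [show δ St.init Sym.ltri = St.boc true none from rfl]
      rw [foldl_seq_iff q0 qf t N j hj w₁.length w₁ le_rfl true none]
      constructor
      · rintro ⟨R, hv, hS⟩
        exact ⟨R, by rw [hv]; rfl, hS⟩
      · rintro ⟨R, hv, hS⟩
        refine ⟨R, ?_, hS⟩
        simpa [rawW] using hv
    | bit c =>
      rw [show δ St.init (Sym.bit c) = St.dead from rfl, foldl_dead]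
      constructor
      · intro h; exact absurd h (by simp)
      · rintro ⟨R, hv, -⟩; simp [rawW] at hv
    | sq =>
      rw [show δ St.init Sym.sq = St.dead from rfl, foldl_dead]
      constructor
      · intro h; exact absurd h (by simp)
      · rintro ⟨R, hv, -⟩; simp [rawW] at hv
    | dollar =>
      rw [show δ St.init Sym.dollar = St.dead from rfl, foldl_dead]
      constructor
      · intro h; exact absurd h (by simp)
      · rintro ⟨R, hv, -⟩; simp [rawW] at hv
    | newline =>
      rw [show δ St.init Sym.newline = St.dead from rfl, foldl_dead]
      constructor
      · intro h; exact absurd h (by simp)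
      · rintro ⟨R, hv, -⟩; simp [rawW] at hv
    | semi =>
      rw [show δ St.init Sym.semi = St.dead from rfl, foldl_dead]
      constructor
      · intro h; exact absurd h (by simp)
      · rintro ⟨R, hv, -⟩; simp [rawW] at hv
    | colon =>
      rw [show δ St.init Sym.colon = St.dead from rfl, foldl_dead]
      constructor
      · intro h; exact absurd h (by simp)
      · rintro ⟨R, hv, -⟩; simp [rawW] at hv
    | state q =>
      rw [show δ St.init (Sym.state q) = St.dead from rfl, foldl_dead]
      constructor
      · intro h; exact absurd h (by simp)
      · rintro ⟨R, hv, -⟩; simp [rawW] at hv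

end Machine


section Arith

/-- `binRep` from the main file, restated locally. -/
def bRep (N i : ℕ) : List Bool :=
  (List.range N).map (fun j => i.testBit (N - 1 - j))

@[simp] lemma bRep_length (N i : ℕ) : (bRep N i).length = N := by simp [bRep]

lemma bRep_getD {N i j : ℕ} (hj : j < N) :
    (bRep N i).getD j false = i.testBit (N - 1 - j) := by
  rw [List.getD_eq_getElem _ _ (by simpa using hj)]
  simp [bRep]

lemma all_drop_iff (a : List Bool) (i : ℕ) :
    ((a.drop i).all id = true) ↔ ∀ l, i ≤ l → l < a.length → a.getD l false = true := by
  rw [List.all_eq_true]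
  constructor
  · intro h l hil hl
    rw [List.getD_eq_getElem _ _ hl]
    refine h _ (List.mem_iff_getElem.mpr ⟨l - i, by simp; omega, ?_⟩)
    rw [List.getElem_drop]
    congr 1
    omega
  · intro h x hx
    obtain ⟨k, hk, hget⟩ := List.mem_iff_getElem.mp hx
    rw [List.getElem_drop] at hget
    have := h (i + k) (by omega) (by simp at hk; omega)
    rw [List.getD_eq_getElem _ _ (by simp at hk; omega)] at this
    simp only [id_eq]
    rw [← hget]
    exact this

lemma all_iff (a : List Bool) :
    (a.all id = true) ↔ ∀ l, l < a.length → a.getD l false = true := by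
  have := all_drop_iff a 0
  simp only [List.drop_zero] at this
  rw [this]
  exact ⟨fun h l hl => h l (Nat.zero_le _) hl, fun h l _ hl => h l hl⟩

/-- All low bits set iff `m % 2^d = 2^d - 1`. -/
lemma low_bits_iff (m d : ℕ) :
    (∀ s, s < d → m.testBit s = true) ↔ m % 2^d = 2^d - 1 := by
  constructor
  · intro h
    apply Nat.eq_of_testBit_eq
    intro i
    rw [Nat.testBit_mod_two_pow, Nat.testBit_two_pow_sub_one]
    by_cases hi : i < d
    · simp [hi, h i hi]
    · simp [hi]
  · intro h s hs
    have h1 : (m % 2^d).testBit s = true := by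
      rw [h, Nat.testBit_two_pow_sub_one]
      simp [hs]
    rw [Nat.testBit_mod_two_pow] at h1
    exact (Bool.and_eq_true_iff.mp h1).2

/-- Increment on testBits. -/
lemma testBit_succ_eq (m s : ℕ) :
    (m+1).testBit s = (m.testBit s).xor (decide (m % 2^s = 2^s - 1)) := by
  have hpow : 0 < 2^s := Nat.two_pow_pos s
  have hdiv := Nat.div_add_mod m (2^s)
  set q := m / 2^s with hq
  set r := m % 2^s with hr
  have hrlt : r < 2^s := Nat.mod_lt _ hpow
  rw [Nat.testBit_eq_decide_div_mod_eq, Nat.testBit_eq_decide_div_mod_eq, ← hq]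
  by_cases hcase : r = 2^s - 1
  · have h1 : r + 1 = 2^s := by omega
    have hm1 : m + 1 = (q + 1) * 2^s := by
      calc m + 1 = 2^s * q + r + 1 := by rw [hdiv]
        _ = 2^s * q + 2^s := by omega
        _ = (q + 1) * 2^s := by ring
    have hdivq : (m+1) / 2^s = q + 1 := by
      rw [hm1]; exact Nat.mul_div_cancel _ hpow
    rw [hdivq]
    rcases Nat.mod_two_eq_zero_or_one q with hq2 | hq2
    · have h2 : (q+1) % 2 = 1 := by omega
      simp [h2, hq2, hcase]
    · have h2 : (q+1) % 2 = 0 := by omega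
      simp [h2, hq2, hcase]
  · have hlt : r + 1 < 2^s := by omega
    have hm1 : m + 1 = (r + 1) + 2^s * q := by rw [← hdiv]; ring
    have hdivq : (m+1) / 2^s = q := by
      rw [hm1, Nat.add_mul_div_left _ _ hpow, Nat.div_eq_of_lt hlt, Nat.zero_add]
    rw [hdivq]
    simp [hcase]

/-- all-ones characterization. -/
lemma bRep_all_iff {N m : ℕ} (hm : m < 2^N) :
    ((bRep N m).all id = true) ↔ m = 2^N - 1 := by
  rw [all_iff]
  simp only [bRep_length]
  constructor
  · intro h
    have hlow : ∀ s, s < N → m.testBit s = true := by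
      intro s hs
      have := h (N - 1 - s) (by omega)
      rwa [bRep_getD (by omega), show N - 1 - (N - 1 - s) = s by omega] at this
    have := (low_bits_iff m N).mp hlow
    rw [Nat.mod_eq_of_lt hm] at this
    exact this
  · intro h l hl
    rw [bRep_getD hl]
    have := (low_bits_iff m N).mpr (by rw [Nat.mod_eq_of_lt hm, h])
    exact this _ (by omega)

lemma bRep_zero_getD {N j : ℕ} (hj : j < N) : (bRep N 0).getD j false = false := by
  rw [bRep_getD hj, Nat.zero_testBit]

/-- the drop-all flag computes the carry. -/
lemma bRep_drop_all {N m j : ℕ} (hj : j < N) :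
    ((bRep N m).drop (j+1)).all id = decide (m % 2^(N-1-j) = 2^(N-1-j) - 1) := by
  by_cases h : m % 2^(N-1-j) = 2^(N-1-j) - 1
  · simp only [h, decide_true]
    rw [all_drop_iff]
    intro l hl1 hl2
    simp only [bRep_length] at hl2
    rw [bRep_getD hl2]
    have hlow := (low_bits_iff m (N-1-j)).mpr h
    exact hlow _ (by omega)
  · simp only [h, decide_false]
    by_contra hcon
    rw [Bool.not_eq_false, all_drop_iff] at hcon
    apply h
    rw [← low_bits_iff]
    intro s hs
    have := hcon (N - 1 - s) (by omega) (by simp; omega)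
    rwa [bRep_getD (by omega), show N - 1 - (N - 1 - s) = s by omega] at this

/-- The address increment lemma. -/
lemma bRep_succ_getD {N m j : ℕ} (hj : j < N) :
    (bRep N (m+1)).getD j false =
      ((bRep N m).getD j false).xor (((bRep N m).drop (j+1)).all id) := by
  rw [bRep_getD hj, bRep_getD hj, bRep_drop_all hj, testBit_succ_eq]

end Arith


section Inj

variable {Q : Type}

lemma delim_split {α : Type*} {d : α} :
    ∀ {y1 : List α} {y2 r1 r2 : List α}, d ∉ y1 → d ∉ y2 →
      y1 ++ d :: r1 = y2 ++ d :: r2 → y1 = y2 ∧ r1 = r2 := by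
  intro y1
  induction y1 with
  | nil =>
    intro y2 r1 r2 _ h2 h
    cases y2 with
    | nil => simpa using h
    | cons b y2 =>
      simp only [List.nil_append, List.cons_append, List.cons_eq_cons] at h
      exact absurd (h.1 ▸ List.mem_cons_self (a := b) (l := y2)) h2
  | cons a y1 ih =>
    intro y2 r1 r2 h1 h2 h
    cases y2 with
    | nil =>
      simp only [List.nil_append, List.cons_append, List.cons_eq_cons] at h
      exact absurd (h.1.symm ▸ List.mem_cons_self (a := a) (l := y1)) h1
    | cons b y2 =>
      simp only [List.cons_append, List.cons_eq_cons] at h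
      obtain ⟨hy, hr⟩ := ih (by simp_all) (by simp_all) h.2
      exact ⟨by rw [h.1, hy], hr⟩

lemma flatten_delim {α : Type*} (d : α) :
    ∀ (l1 l2 : List (List α)),
      (∀ x ∈ l1, ∃ y, x = y ++ [d] ∧ d ∉ y) →
      (∀ x ∈ l2, ∃ y, x = y ++ [d] ∧ d ∉ y) →
      l1.flatten = l2.flatten → l1 = l2 := by
  intro l1
  induction l1 with
  | nil =>
    intro l2 _ h2 h
    cases l2 with
    | nil => rfl
    | cons x l2 =>
      obtain ⟨y, hy, -⟩ := h2 x (by simp)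
      simp only [List.flatten_nil, List.flatten_cons] at h
      rw [hy] at h
      exact absurd h.symm (by simp)
  | cons x l1 ih =>
    intro l2 h1 h2 h
    cases l2 with
    | nil =>
      obtain ⟨y, hy, -⟩ := h1 x (by simp)
      simp only [List.flatten_nil, List.flatten_cons] at h
      rw [hy] at h
      exact absurd h (by simp)
    | cons x2 l2 =>
      obtain ⟨y1, hy1, hd1⟩ := h1 x (by simp)
      obtain ⟨y2, hy2, hd2⟩ := h2 x2 (by simp)
      simp only [List.flatten_cons] at h
      rw [hy1, hy2] at h
      simp only [List.append_assoc, List.singleton_append] at h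
      obtain ⟨hy, hr⟩ := delim_split hd1 hd2 h
      have hrest := ih l2 (fun x hx => h1 x (by simp [hx])) (fun x hx => h2 x (by simp [hx])) hr
      rw [hy1, hy2, hy, hrest]


lemma not_mem_osW (d : Sym Q) (hd : ∀ q : Q, d ≠ Sym.state q) (os : Option Q) : d ∉ osW os := by
  cases os <;> simp [osW]
  exact hd _

lemma blockW_delim (B : RawB Q) : ∃ y, blockW B = y ++ [Sym.semi] ∧ Sym.semi ∉ y := by
  refine ⟨B.a.map Sym.bit ++ Sym.colon :: (osW B.os ++ [Sym.bit B.c]), by simp [blockW], ?_⟩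
  simp only [List.mem_append, List.mem_cons, List.mem_map]
  push_neg
  refine ⟨fun b _ => by simp, by simp, ?_⟩
  refine ⟨not_mem_osW _ (fun q => by simp) _, by simp⟩

lemma newline_not_mem_blockW (B : RawB Q) : Sym.newline ∉ blockW B := by
  simp only [blockW, List.mem_append, List.mem_cons, List.mem_map]
  push_neg
  exact ⟨fun b _ => by simp, by simp, not_mem_osW _ (fun q => by simp) _, by simp, by simp⟩

lemma sq_not_mem_blockW (B : RawB Q) : Sym.sq ∉ blockW B := by
  simp only [blockW, List.mem_append, List.mem_cons, List.mem_map]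
  push_neg
  exact ⟨fun b _ => by simp, by simp, not_mem_osW _ (fun q => by simp) _, by simp, by simp⟩

lemma cfgW_delim (C : List (RawB Q)) :
    ∃ y, cfgW C = y ++ [Sym.newline] ∧ Sym.newline ∉ y := by
  refine ⟨Sym.dollar :: (C.map blockW).flatten, by simp [cfgW], ?_⟩
  simp only [List.mem_cons, List.mem_flatten]
  push_neg
  refine ⟨by simp, fun l hl => ?_⟩
  obtain ⟨B, -, rfl⟩ := List.mem_map.mp hl
  exact newline_not_mem_blockW B

lemma sq_not_mem_cfgW (C : List (RawB Q)) : Sym.sq ∉ cfgW C := by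
  simp only [cfgW, List.mem_cons, List.mem_append, List.mem_flatten]
  push_neg
  refine ⟨by simp, fun l hl => ?_, by simp⟩
  obtain ⟨B, -, rfl⟩ := List.mem_map.mp hl
  exact sq_not_mem_blockW B

lemma blockW_inj {B1 B2 : RawB Q} (h : blockW B1 = blockW B2) : B1 = B2 := by
  simp only [blockW] at h
  obtain ⟨ha, hrest⟩ := delim_split (d := Sym.colon)
    (by simp only [List.mem_map]; push_neg; exact fun b _ => by simp)
    (by simp only [List.mem_map]; push_neg; exact fun b _ => by simp) h
  have haa : B1.a = B2.a := by
    have : Function.Injective (Sym.bit : Bool → Sym Q) := fun a b hab => by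
      cases hab; rfl
    exact List.map_injective_iff.mpr this ha
  have hos : B1.os = B2.os ∧ B1.c = B2.c := by
    cases hos1 : B1.os with
    | none =>
      cases hos2 : B2.os with
      | none =>
        rw [hos1, hos2] at hrest
        simp [osW] at hrest
        exact ⟨rfl, hrest⟩
      | some q2 =>
        rw [hos1, hos2] at hrest
        simp [osW] at hrest
    | some q1 =>
      cases hos2 : B2.os with
      | none =>
        rw [hos1, hos2] at hrest
        simp [osW] at hrest
      | some q2 =>
        rw [hos1, hos2] at hrest
        simp [osW] at hrest
        exact ⟨by rw [hrest.1], hrest.2⟩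
  obtain ⟨h1, h2⟩ := hos
  cases B1; cases B2
  simp_all

lemma cfgW_inj {C1 C2 : List (RawB Q)} (h : cfgW C1 = cfgW C2) : C1 = C2 := by
  simp only [cfgW, List.cons_eq_cons] at h
  have h2 := h.2
  have hfl : (C1.map blockW).flatten = (C2.map blockW).flatten := by
    have := delim_split (d := Sym.newline) (y1 := (C1.map blockW).flatten)
      (y2 := (C2.map blockW).flatten) (r1 := []) (r2 := [])
      (fun hm => by
        obtain ⟨l, hl, hm⟩ := List.mem_flatten.mp hm
        obtain ⟨B, -, rfl⟩ := List.mem_map.mp hl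
        exact newline_not_mem_blockW B hm)
      (fun hm => by
        obtain ⟨l, hl, hm⟩ := List.mem_flatten.mp hm
        obtain ⟨B, -, rfl⟩ := List.mem_map.mp hl
        exact newline_not_mem_blockW B hm)
      (by simpa using h2)
    exact this.1
  have := flatten_delim Sym.semi (C1.map blockW) (C2.map blockW)
    (fun x hx => by obtain ⟨B, -, rfl⟩ := List.mem_map.mp hx; exact blockW_delim B)
    (fun x hx => by obtain ⟨B, -, rfl⟩ := List.mem_map.mp hx; exact blockW_delim B) hfl
  exact List.map_injective_iff.mpr (fun a b hab => blockW_inj hab) this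

lemma rawW_inj {R1 R2 : List (List (RawB Q))} (h : rawW R1 = rawW R2) : R1 = R2 := by
  simp only [rawW, List.cons_eq_cons] at h
  have h2 := h.2
  have hfl : (R1.map cfgW).flatten = (R2.map cfgW).flatten := by
    have := delim_split (d := Sym.sq) (y1 := (R1.map cfgW).flatten)
      (y2 := (R2.map cfgW).flatten) (r1 := []) (r2 := [])
      (fun hm => by
        obtain ⟨l, hl, hm⟩ := List.mem_flatten.mp hm
        obtain ⟨C, -, rfl⟩ := List.mem_map.mp hl
        exact sq_not_mem_cfgW C hm)
      (fun hm => by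
        obtain ⟨l, hl, hm⟩ := List.mem_flatten.mp hm
        obtain ⟨C, -, rfl⟩ := List.mem_map.mp hl
        exact sq_not_mem_cfgW C hm)
      (by simpa using h2)
    exact this.1
  have := flatten_delim Sym.newline (R1.map cfgW) (R2.map cfgW)
    (fun x hx => by obtain ⟨C, -, rfl⟩ := List.mem_map.mp hx; exact cfgW_delim C)
    (fun x hx => by obtain ⟨C, -, rfl⟩ := List.mem_map.mp hx; exact cfgW_delim C) hfl
  exact List.map_injective_iff.mpr (fun a b hab => cfgW_inj hab) this

end Inj


section Spec

variable {Q : Type} (q0 qf : Q) (t : List Bool) (N : ℕ)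

/-- specification of the state-symbol bookkeeping of a block list. -/
def OsSpec (f : Bool) (lq lq2 : Option Q) (sn : Bool) (e : ℕ) (C : List (RawB Q)) : Prop :=
  (sn = true ∧ (∀ B ∈ C, B.os = none) ∧ lq2 = lq) ∨
  (sn = false ∧ ∃ (i : ℕ) (hi : i < C.length) (q : Q), (C[i]'hi).os = some q ∧ lq2 = some q ∧
    (∀ (i' : ℕ) (hi' : i' < C.length), i' ≠ i → (C[i']'hi').os = none) ∧
    (f = true → e + i = 0 ∧ q = q0))

lemma getD_min (e : ℕ) : t.getD (min e (t.length+1)) false = t.getD e false := by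
  rcases le_or_gt e t.length with h | h
  · rw [min_eq_left (by omega)]
  · rw [List.getD_eq_default _ _ (by simp; omega), List.getD_eq_default _ _ (by omega)]

lemma blocksOK_lq2 (j : ℕ) :
    ∀ (C : List (RawB Q)) (f : Bool) (lq lq2 : Option Q) (cnt : ℕ) (sn pb pa ptop : Bool),
      BlocksOK q0 t N j f lq cnt sn pb pa ptop C lq2 → lq2 = C.foldl updLq lq := by
  intro C
  induction C with
  | nil =>
    intro f lq lq2 cnt sn pb pa ptop h
    exact h.2.2
  | cons B C' ih =>
    intro f lq lq2 cnt sn pb pa ptop h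
    exact ih _ _ _ _ _ _ _ _ h.2.2.2.2.2

lemma topB_decide {B : RawB Q} {e : ℕ} (he : e < 2^N) (hBa : B.a = bRep N e) :
    topB B = decide (e + 1 = 2^N) := by
  have h2 : 0 < 2^N := Nat.two_pow_pos N
  unfold topB
  rw [hBa]
  by_cases hh : e + 1 = 2^N
  · rw [decide_eq_true hh]
    exact (bRep_all_iff he).mpr (by omega)
  · rw [decide_eq_false hh]
    rw [← Bool.not_eq_true]
    intro hcon
    exact hh (by have := (bRep_all_iff he).mp hcon; omega)

lemma blocks_reconstruct (hN : 0 < N) :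
    ∀ (C : List (RawB Q)) (f : Bool) (lq lq2 : Option Q) (sn : Bool) (e : ℕ)
      (pb pa : ℕ → Bool) (ptop : Bool),
      e ≤ 2^N →
      ptop = decide (e = 2^N) →
      (e < 2^N → ∀ j, j < N → ((pb j).xor (pa j)) = (bRep N e).getD j false) →
      (∀ j, j < N → BlocksOK q0 t N j f lq (min e (t.length+1)) sn (pb j) (pa j) ptop C lq2) →
      e + C.length = 2^N ∧
      (∀ (i : ℕ) (hi : i < C.length), (C[i]'hi).a = bRep N (e+i)) ∧
      (f = true → ∀ (i : ℕ) (hi : i < C.length), (C[i]'hi).c = t.getD (e+i) false) ∧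
      OsSpec q0 f lq lq2 sn e C := by
  intro C
  induction C with
  | nil =>
    intro f lq lq2 sn e pb pa ptop he hptop hxor hB
    obtain ⟨h1, h2, h3⟩ := hB 0 hN
    rw [hptop, decide_eq_true_eq] at h1
    refine ⟨by simpa using h1, by simp, by simp, Or.inl ⟨h2, by simp, h3⟩⟩
  | cons B C' ih =>
    intro f lq lq2 sn e pb pa ptop he hptop hxor hB
    have hptopf : ptop = false := (hB 0 hN).1
    have he' : e < 2^N := by
      rcases Nat.lt_or_ge e (2^N) with h | h
      · exact h
      · exfalso
        have : e = 2^N := by omega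
        rw [hptop, this, decide_eq_true rfl] at hptopf
        simp at hptopf
    have hlenB : B.a.length = N := (hB 0 hN).2.1
    have hBa : B.a = bRep N e := by
      apply List.ext_getElem (by simp [hlenB])
      intro i h1 h2
      have hiN : i < N := by omega
      have := (hB i hiN).2.2.1
      rw [hxor he' i hiN] at this
      unfold bitJ at this
      rw [List.getD_eq_getElem _ _ h1, List.getD_eq_getElem _ _ h2] at this
      exact this
    have hcbB : f = true → B.c = t.getD e false := by
      intro hf
      rw [← getD_min t e]
      exact (hB 0 hN).2.2.2.2.1 hf
    have hosB := fun (j : ℕ) (hj : j < N) => (hB j hj).2.2.2.1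
    have hrec : ∀ j, j < N → BlocksOK q0 t N j f (updLq lq B) (min (e+1) (t.length+1))
        (sn || B.os.isSome) (bitJ j B) (alaJ j B) (topB B) C' lq2 := by
      intro j hj
      have h := (hB j hj).2.2.2.2.2
      have : min (min e (t.length+1) + 1) (t.length+1) = min (e+1) (t.length+1) := by omega
      rwa [this] at h
    have hih := ih f (updLq lq B) lq2 (sn || B.os.isSome) (e+1)
      (fun j => bitJ j B) (fun j => alaJ j B) (topB B)
      (by omega)
      (topB_decide N he' hBa)
      (by
        intro _ j hj
        unfold bitJ alaJ
        rw [hBa]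
        exact (bRep_succ_getD hj).symm)
      hrec
    obtain ⟨hlen2, haddr2, hcont2, hos2⟩ := hih
    refine ⟨by simp; omega, ?_, ?_, ?_⟩
    · intro i hi
      cases i with
      | zero => simpa using hBa
      | succ i =>
        have hi' : i < C'.length := by simpa using hi
        have := haddr2 i hi'
        rw [show e + 1 + i = e + (i+1) by omega] at this
        simpa using this
    · intro hf i hi
      cases i with
      | zero => simpa using hcbB hf
      | succ i =>
        have hi' : i < C'.length := by simpa using hi
        have := hcont2 hf i hi'
        rw [show e + 1 + i = e + (i+1) by omega] at this
        simpa using this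
    · cases hsn : sn with
      | true =>
        have hBos : B.os = none := by
          cases hos : B.os with
          | none => rfl
          | some q =>
            have := (hosB 0 hN q hos).1
            rw [hsn] at this
            simp at this
        rcases hos2 with ⟨-, hall, hlq⟩ | ⟨hsn', -⟩
        · refine Or.inl ⟨rfl, ?_, ?_⟩
          · intro B' hB'
            rcases List.mem_cons.mp hB' with rfl | h
            · exact hBos
            · exact hall _ h
          · rw [hlq]
            unfold updLq
            rw [hBos]
        · rw [hsn, hBos] at hsn'
          simp at hsn'
      | false =>
        cases hos : B.os with
        | some q =>
          rcases hos2 with ⟨-, hall, hlq⟩ | ⟨hsn', -⟩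
          · refine Or.inr ⟨rfl, 0, by simp, q, by simpa using hos, ?_, ?_, ?_⟩
            · rw [hlq]
              unfold updLq
              rw [hos]
            · intro i' hi' hne
              cases i' with
              | zero => exact absurd rfl hne
              | succ i' =>
                have : i' < C'.length := by simpa using hi'
                simpa using hall _ (List.getElem_mem _)
            · intro hf
              have := (hosB 0 hN q hos).2 hf
              constructor
              · omega
              · exact this.2
          · rw [hsn, hos] at hsn'
            simp at hsn'
        | none =>
          rcases hos2 with ⟨hsn', -⟩ | ⟨-, i, hi, q, hoi, hlq, huni, hf⟩
          · rw [hsn, hos] at hsn'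
            simp at hsn'
          · refine Or.inr ⟨rfl, i+1, by simpa using hi, q, by simpa using hoi, hlq, ?_, ?_⟩
            · intro i' hi' hne
              cases i' with
              | zero => simpa using hos
              | succ i' =>
                have hlt : i' < C'.length := by simpa using hi'
                have := huni i' hlt (by omega)
                simpa using this
            · intro hff
              have := hf hff
              exact ⟨by omega, this.2⟩

lemma blocks_construct (j : ℕ) (hj : j < N) :
    ∀ (C : List (RawB Q)) (f : Bool) (lq lq2 : Option Q) (sn : Bool) (e : ℕ)
      (pb pa ptop : Bool),
      e + C.length = 2^N →
      ptop = decide (e = 2^N) →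
      (e < 2^N → (pb.xor pa) = (bRep N e).getD j false) →
      (∀ (i : ℕ) (hi : i < C.length), (C[i]'hi).a = bRep N (e+i)) →
      (f = true → ∀ (i : ℕ) (hi : i < C.length), (C[i]'hi).c = t.getD (e+i) false) →
      OsSpec q0 f lq lq2 sn e C →
      BlocksOK q0 t N j f lq (min e (t.length+1)) sn pb pa ptop C lq2 := by
  intro C
  induction C with
  | nil =>
    intro f lq lq2 sn e pb pa ptop hlen hptop hxor haddr hcont hos
    simp only [List.length_nil, Nat.add_zero] at hlen
    rcases hos with ⟨hsn, -, hlq⟩ | ⟨-, i, hi, -⟩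
    · exact ⟨by rw [hptop, hlen, decide_eq_true rfl], hsn, hlq⟩
    · simp at hi
  | cons B C' ih =>
    intro f lq lq2 sn e pb pa ptop hlen hptop hxor haddr hcont hos
    have he' : e < 2^N := by simp at hlen; omega
    have hBa : B.a = bRep N e := by exact haddr 0 (by simp)
    refine ⟨by rw [hptop, decide_eq_false (by omega)], by rw [hBa]; simp, ?_, ?_, ?_, ?_⟩
    · unfold bitJ
      rw [hBa, hxor he']
    · intro q hq
      rcases hos with ⟨-, hall, -⟩ | ⟨hsn, i, hi, q', hoi, hlq, huni, hf⟩
      · exact absurd (hall B (by simp)) (by rw [hq]; simp)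
      · have hi0 : i = 0 := by
          by_contra hne
          have := huni 0 (by simp) (fun h => hne h.symm)
          simp only [List.getElem_cons_zero] at this
          rw [hq] at this
          simp at this
        subst hi0
        simp only [List.getElem_cons_zero] at hoi
        rw [hq] at hoi
        cases hoi
        refine ⟨hsn, ?_⟩
        intro hff
        obtain ⟨h1, h2⟩ := hf hff
        exact ⟨by omega, h2⟩
    · intro hf
      rw [getD_min]
      exact hcont hf 0 (by simp)
    · have hmin : min (min e (t.length+1) + 1) (t.length+1) = min (e+1) (t.length+1) := by omega
      rw [hmin]
      apply ih f (updLq lq B) lq2 (sn || B.os.isSome) (e+1) (bitJ j B) (alaJ j B) (topB B)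
      · simp at hlen ⊢; omega
      · exact topB_decide N he' hBa
      · intro _
        unfold bitJ alaJ
        rw [hBa]
        exact (bRep_succ_getD hj).symm
      · intro i hi
        have := haddr (i+1) (by simpa using Nat.succ_lt_succ hi)
        rw [show e + (i+1) = e + 1 + i by omega] at this
        simpa using this
      · intro hf i hi
        have := hcont hf (i+1) (by simpa using Nat.succ_lt_succ hi)
        rw [show e + (i+1) = e + 1 + i by omega] at this
        simpa using this
      · rcases hos with ⟨hsn, hall, hlq⟩ | ⟨hsn, i, hi, q, hoi, hlq, huni, hf⟩
        · have hBos : B.os = none := hall B (by simp)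
          refine Or.inl ⟨by rw [hsn, hBos]; rfl, fun B' h => hall B' (by simp [h]), ?_⟩
          rw [hlq]
          unfold updLq
          rw [hBos]
        · cases i with
          | zero =>
            simp only [List.getElem_cons_zero] at hoi
            refine Or.inl ⟨by rw [hsn, hoi]; rfl, ?_, ?_⟩
            · intro B' hB'
              obtain ⟨i', hi', rfl⟩ := List.mem_iff_getElem.mp hB'
              have := huni (i'+1) (by simpa using Nat.succ_lt_succ hi') (by omega)
              simpa using this
            · rw [hlq]
              unfold updLq
              rw [hoi]
          | succ i =>
            have hBos : B.os = none := by
              have := huni 0 (by simp) (by omega)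
              simpa using this
            refine Or.inr ⟨by rw [hsn, hBos]; rfl, i, by simpa using hi, q, by simpa using hoi,
              hlq, ?_, ?_⟩
            · intro i' hi' hne
              have := huni (i'+1) (by simpa using Nat.succ_lt_succ hi') (by omega)
              simpa using this
            · intro hff
              obtain ⟨h1, h2⟩ := hf hff
              exact ⟨by omega, h2⟩


def CfgSpec (f : Bool) (lq lq2 : Option Q) (C : List (RawB Q)) : Prop :=
  C.length = 2^N ∧ (∀ (i : ℕ) (hi : i < C.length), (C[i]'hi).a = bRep N i) ∧
  (f = true → ∀ (i : ℕ) (hi : i < C.length), (C[i]'hi).c = t.getD i false) ∧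
  OsSpec q0 f lq lq2 false 0 C

def SeqSpec : Bool → Option Q → List (List (RawB Q)) → Prop
  | f, lq, [] => f = false ∧ lq = some qf
  | f, lq, C :: R => ∃ lq2, CfgSpec q0 t N f lq lq2 C ∧ SeqSpec false lq2 R

lemma seq_iff (hN : 0 < N) : ∀ (R : List (List (RawB Q))) (f : Bool) (lq : Option Q),
    (∀ j, j < N → SeqOK q0 qf t N j f lq R) ↔ SeqSpec q0 qf t N f lq R := by
  have h2 : 0 < 2^N := Nat.two_pow_pos N
  intro R
  induction R with
  | nil =>
    intro f lq
    constructor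
    · intro h; exact h 0 hN
    · intro h j hj; exact h
  | cons C R' ih =>
    intro f lq
    constructor
    · intro h
      have hBj : ∀ j, j < N → BlocksOK q0 t N j f lq 0 false false false false C (C.foldl updLq lq) ∧
          SeqOK q0 qf t N j false (C.foldl updLq lq) R' := by
        intro j hj
        obtain ⟨lq2, hB, hS⟩ := h j hj
        have heq := blocksOK_lq2 q0 t N j C f lq lq2 0 false false false false hB
        rw [heq] at hB hS
        exact ⟨hB, hS⟩
      have hrec := blocks_reconstruct q0 t N hN C f lq (C.foldl updLq lq) false 0
        (fun _ => false) (fun _ => false) false (Nat.zero_le _)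
        ((decide_eq_false (by omega)).symm)
        (fun _ j hj => by rw [bRep_zero_getD hj]; rfl)
        (fun j hj => by
          rw [show min 0 (t.length+1) = 0 from by simp]
          exact (hBj j hj).1)
      obtain ⟨hlen, haddr, hcont, hos⟩ := hrec
      refine ⟨C.foldl updLq lq,
        ⟨by simpa using hlen, fun i hi => by simpa using haddr i hi,
         fun hf i hi => by simpa using hcont hf i hi, hos⟩,
        (ih false (C.foldl updLq lq)).mp (fun j hj => (hBj j hj).2)⟩
    · rintro ⟨lq2, ⟨hlen, haddr, hcont, hos⟩, hS⟩ j hj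
      refine ⟨lq2, ?_, (ih false lq2).mpr hS j hj⟩
      have hc := blocks_construct q0 t N j hj C f lq lq2 false 0 false false false
        (by simpa using hlen) ((decide_eq_false (by omega)).symm)
        (fun _ => by rw [bRep_zero_getD hj]; rfl)
        (fun i hi => by simpa using haddr i hi)
        (fun hf i hi => by simpa using hcont hf i hi) hos
      rwa [show min 0 (t.length+1) = 0 from by simp] at hc

end Spec


section Bridge

variable {Q : Type} (q0 qf : Q) (t : List Bool) (N : ℕ)

lemma bRep_binRep (N i : ℕ) : bRep N i = binRep N i := rfl

def rawOf (N : ℕ) (c : TMConfig Q) : List (RawB Q) :=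
  (List.range (2^N)).map
    (fun i => ⟨binRep N i, if i = c.head then some c.state else none, c.cells i⟩)

lemma cellBlock_blockW (N i : ℕ) (st : Option Q) (cb : Bool) :
    cellBlock N i st cb = blockW ⟨binRep N i, st, cb⟩ := by
  cases st <;> simp [cellBlock, blockW, osW]

lemma encodeConfig_cfgW (c : TMConfig Q) : encodeConfig N c = cfgW (rawOf N c) := by
  unfold encodeConfig cfgW rawOf
  rw [List.map_map]
  have hmap : List.map (fun i => cellBlock N i (if i = c.head then some c.state else none)
        (c.cells i)) (List.range (2^N)) =
      List.map (blockW ∘ fun i => (⟨binRep N i, if i = c.head then some c.state else none,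
        c.cells i⟩ : RawB Q)) (List.range (2^N)) :=
    List.map_congr_left (fun i _ => cellBlock_blockW N i _ _)
  rw [hmap]
  simp

lemma seqVia_rawW (w : List (Sym Q)) (cfgs : List (TMConfig Q)) :
    SeqVia N w cfgs ↔
      cfgs ≠ [] ∧ (∀ c ∈ cfgs, c.head < 2^N) ∧ w = rawW (cfgs.map (rawOf N)) := by
  have hmap : List.map (encodeConfig N) cfgs = List.map (cfgW ∘ rawOf N) cfgs :=
    List.map_congr_left (fun c _ => encodeConfig_cfgW N c)
  unfold SeqVia rawW
  rw [List.map_map, hmap]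
  constructor
  · rintro ⟨h1, h2, h3⟩
    exact ⟨h1, h2, by rw [h3]; simp⟩
  · rintro ⟨h1, h2, h3⟩
    exact ⟨h1, h2, by rw [h3]; simp⟩

lemma rawOf_getElem (c : TMConfig Q) {m : ℕ} (hm : m < (rawOf N c).length) :
    (rawOf N c)[m]'hm =
      ⟨binRep N m, if m = c.head then some c.state else none, c.cells m⟩ := by
  simp [rawOf]

lemma rawOf_length (c : TMConfig Q) : (rawOf N c).length = 2^N := by simp [rawOf]

lemma seqSpec_decode (ht : t.length ≤ 2^N) :
    ∀ (R : List (List (RawB Q))) (f : Bool) (lq : Option Q),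
      SeqSpec q0 qf t N f lq R →
      ∃ cfgs : List (TMConfig Q),
        R = cfgs.map (rawOf N) ∧ (∀ c ∈ cfgs, c.head < 2^N) ∧
        (∀ c, cfgs.head? = some c → f = true → (c.state = q0 ∧ InitializedWith t N c)) ∧
        (match cfgs.getLast? with
         | some c => c.state = qf
         | none => f = false ∧ lq = some qf) := by
  intro R
  induction R with
  | nil =>
    intro f lq h
    exact ⟨[], rfl, by simp, by simp, ⟨h.1, h.2⟩⟩
  | cons C R' ih =>
    rintro f lq ⟨lq2, ⟨hlen, haddr, hcont, hos⟩, hS⟩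
    rcases hos with ⟨hsn, -⟩ | ⟨-, i, hi, q, hoi, hlq2, huni, hf⟩
    · simp at hsn
    obtain ⟨cfgs', hR', hheads', hfirst', hlast'⟩ := ih false lq2 hS
    have hiN : i < 2^N := by omega
    have hh2 : ∀ m : ℕ, m < 2^N → m < C.length := by omega
    refine ⟨⟨fun m => if h : m < 2^N then (C[m]'(hh2 m h)).c else false, q, i⟩ :: cfgs',
      ?_, ?_, ?_, ?_⟩
    · have hCeq : C = rawOf N ⟨fun m => if h : m < 2^N then (C[m]'(hh2 m h)).c else false, q, i⟩ := by
        apply List.ext_getElem (by rw [rawOf_length]; omega)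
        intro m h1 h2
        have hm : m < 2^N := by omega
        rw [rawOf_getElem]
        show C[m]'h1 = ⟨binRep N m, if m = i then some q else none,
          if h : m < 2^N then (C[m]'(hh2 m h)).c else false⟩
        have e1 : (C[m]'h1).a = binRep N m := by rw [haddr m h1]; rfl
        have e2 : (C[m]'h1).os = (if m = i then some q else none) := by
          by_cases hmi : m = i
          · subst hmi
            rw [if_pos rfl]
            exact hoi
          · rw [if_neg hmi]
            exact huni m h1 hmi
        have e3 : (if h : m < 2^N then (C[m]'(hh2 m h)).c else false) = (C[m]'h1).c :=
          dif_pos hm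
        conv_lhs => rw [show C[m]'h1 = (⟨(C[m]'h1).a, (C[m]'h1).os, (C[m]'h1).c⟩ : RawB Q)
          from rfl]
        rw [e1, e2, e3]
      rw [List.map_cons, ← hCeq, ← hR']
    · intro c hc
      rcases List.mem_cons.mp hc with rfl | h
      · exact hiN
      · exact hheads' c h
    · intro c hc hf'
      simp only [List.head?_cons, Option.some.injEq] at hc
      subst hc
      obtain ⟨hi0, hq⟩ := hf hf'
      refine ⟨hq, ?_, ?_, ?_⟩
      · show i = 0
        omega
      · intro m hm
        have hm2 : m < 2^N := by omega
        show (if h : m < 2^N then (C[m]'(hh2 m h)).c else false) = t.getD m false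
        rw [dif_pos hm2]
        exact hcont hf' m (by omega)
      · intro m hm1 hm2
        show (if h : m < 2^N then (C[m]'(hh2 m h)).c else false) = false
        rw [dif_pos hm2]
        rw [hcont hf' m (by omega)]
        exact List.getD_eq_default _ _ hm1
    · cases cfgs' with
      | nil =>
        show q = qf
        simp only [List.getLast?_nil] at hlast'
        have h1 : some q = some qf := by rw [← hlq2, hlast'.2]
        exact Option.some_injective _ h1
      | cons c2 cfgs'' =>
        rw [List.getLast?_cons_cons]
        exact hlast'

lemma seqSpec_encode :
    ∀ (cfgs : List (TMConfig Q)) (f : Bool) (lq : Option Q),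
      (∀ c ∈ cfgs, c.head < 2^N) →
      (f = true → ∀ c, cfgs.head? = some c → c.state = q0 ∧ InitializedWith t N c) →
      (match cfgs.getLast? with
       | some c => c.state = qf
       | none => f = false ∧ lq = some qf) →
      SeqSpec q0 qf t N f lq (cfgs.map (rawOf N)) := by
  intro cfgs
  induction cfgs with
  | nil =>
    intro f lq _ _ hlast
    exact hlast
  | cons c cfgs' ih =>
    intro f lq hheads hfirst hlast
    have hcN : c.head < 2^N := hheads c (by simp)
    refine ⟨some c.state, ⟨rawOf_length N c, ?_, ?_, ?_⟩, ?_⟩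
    · intro i hi
      rw [rawOf_getElem]
      rfl
    · intro hf i hi
      rw [rawOf_getElem]
      have hInit := (hfirst hf c (by simp)).2
      have hiN : i < 2^N := by rw [rawOf_length] at hi; omega
      show c.cells i = t.getD i false
      rcases Nat.lt_or_ge i t.length with h | h
      · exact hInit.2.1 i h
      · rw [hInit.2.2 i h hiN, List.getD_eq_default _ _ h]
    · refine Or.inr ⟨rfl, c.head, by rw [rawOf_length]; omega, c.state, ?_, rfl, ?_, ?_⟩
      · rw [rawOf_getElem, if_pos rfl]
      · intro i' hi' hne
        rw [rawOf_getElem, if_neg hne]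
      · intro hf
        have h1 := (hfirst hf c (by simp)).1
        have hh := (hfirst hf c (by simp)).2.1
        exact ⟨by omega, h1⟩
    · apply ih false (some c.state) (fun c' h => hheads c' (by simp [h]))
        (fun hf => by simp at hf)
      cases cfgs' with
      | nil =>
        simp only [List.getLast?_nil]
        simp only [List.getLast?_singleton] at hlast
        exact ⟨trivial, by rw [hlast]⟩
      | cons c2 cfgs'' =>
        rw [List.getLast?_cons_cons] at hlast
        exact hlast

end Bridge


section Master

variable {Q : Type} (q0 qf : Q) (t : List Bool) (N : ℕ)

/-- the "good" predicate: encodes a sequence with correct first and last config. -/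
def Good (w : List (Sym Q)) : Prop :=
  ∃ cfgs : List (TMConfig Q), SeqVia N w cfgs ∧
    (∃ c, cfgs.head? = some c ∧ c.state = q0 ∧ InitializedWith t N c) ∧
    (∃ c, cfgs.getLast? = some c ∧ c.state = qf)

lemma master_iff (hN : 0 < N) (ht : t.length ≤ 2^N) (w : List (Sym Q)) :
    (∀ j, j < N → w.foldl (step q0 qf t N j) St.init = St.done) ↔ Good q0 qf t N w := by
  constructor
  · intro h
    obtain ⟨R0, hw0, hS0⟩ := (foldl_init_iff q0 qf t N 0 hN w).mp (h 0 hN)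
    have hSall : ∀ j, j < N → SeqOK q0 qf t N j true none R0 := by
      intro j hj
      obtain ⟨Rj, hwj, hSj⟩ := (foldl_init_iff q0 qf t N j hj w).mp (h j hj)
      have hRR : Rj = R0 := rawW_inj (by rw [← hwj, ← hw0])
      rwa [hRR] at hSj
    have hSpec := (seq_iff q0 qf t N hN R0 true none).mp hSall
    obtain ⟨cfgs, hR, hheads, hfirst, hlast⟩ := seqSpec_decode q0 qf t N ht R0 true none hSpec
    have hne : cfgs ≠ [] := by
      intro hc
      rw [hc] at hR
      rw [hR] at hSpec
      simp only [List.map_nil] at hSpec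
      exact absurd hSpec.1 (by simp)
    obtain ⟨c0, hc0⟩ : ∃ c0, cfgs.head? = some c0 := by
      cases cfgs with
      | nil => exact absurd rfl hne
      | cons a l => exact ⟨a, rfl⟩
    obtain ⟨cl, hcl⟩ : ∃ cl, cfgs.getLast? = some cl :=
      Option.isSome_iff_exists.mp (List.getLast?_isSome.mpr hne)
    refine ⟨cfgs, (seqVia_rawW N w cfgs).mpr ⟨hne, hheads, by rw [hw0, hR]⟩,
      ⟨c0, hc0, hfirst c0 hc0 rfl⟩, ⟨cl, hcl, ?_⟩⟩
    rw [hcl] at hlast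
    exact hlast
  · rintro ⟨cfgs, hvia, ⟨c0, hc0, hq0, hInit⟩, ⟨cl, hcl, hqf⟩⟩ j hj
    obtain ⟨hne, hheads, hw⟩ := (seqVia_rawW N w cfgs).mp hvia
    apply (foldl_init_iff q0 qf t N j hj w).mpr
    refine ⟨cfgs.map (rawOf N), hw, ?_⟩
    have hSpec : SeqSpec q0 qf t N true none (cfgs.map (rawOf N)) := by
      apply seqSpec_encode q0 qf t N cfgs true none hheads
      · intro _ c hc
        rw [hc0] at hc
        cases hc
        exact ⟨hq0, hInit⟩
      · rw [hcl]
        exact hqf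
    exact ((seq_iff q0 qf t N hN (cfgs.map (rawOf N)) true none).mpr hSpec) j hj

lemma rawOf_determines {c c' : TMConfig Q} (hc : c.head < 2^N) (hc' : c'.head < 2^N)
    (h : rawOf N c = rawOf N c') :
    c.state = c'.state ∧ c.head = c'.head ∧ (∀ i, i < 2^N → c.cells i = c'.cells i) := by
  have hget : ∀ (m : ℕ) (hm : m < 2^N),
      (⟨binRep N m, if m = c.head then some c.state else none, c.cells m⟩ : RawB Q) =
      ⟨binRep N m, if m = c'.head then some c'.state else none, c'.cells m⟩ := by
    intro m hm
    have h1 : m < (rawOf N c).length := by rw [rawOf_length]; omega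
    have h2 : m < (rawOf N c').length := by rw [rawOf_length]; omega
    rw [← rawOf_getElem N c h1, ← rawOf_getElem N c' h2]
    congr 1
  have hhead : c.head = c'.head ∧ c.state = c'.state := by
    have := hget c.head hc
    simp only [RawB.mk.injEq, if_pos rfl] at this
    by_cases hh : c.head = c'.head
    · rw [if_pos hh] at this
      exact ⟨hh, by simpa using this.2.1⟩
    · rw [if_neg hh] at this
      simp at this
  refine ⟨hhead.2, hhead.1, ?_⟩
  intro i hi
  have := hget i hi
  simp only [RawB.mk.injEq] at this
  exact this.2.2

lemma seqVia_unique {w : List (Sym Q)} {cfgs cfgs' : List (TMConfig Q)}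
    (h1 : SeqVia N w cfgs) (h2 : SeqVia N w cfgs') :
    cfgs.length = cfgs'.length ∧
    (∀ (k : ℕ) (hk : k < cfgs.length) (hk' : k < cfgs'.length),
      (cfgs[k]'hk).state = (cfgs'[k]'hk').state ∧ (cfgs[k]'hk).head = (cfgs'[k]'hk').head ∧
      (∀ i, i < 2^N → (cfgs[k]'hk).cells i = (cfgs'[k]'hk').cells i)) := by
  obtain ⟨-, hh1, hw1⟩ := (seqVia_rawW N w cfgs).mp h1
  obtain ⟨-, hh2, hw2⟩ := (seqVia_rawW N w cfgs').mp h2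
  have hmap : cfgs.map (rawOf N) = cfgs'.map (rawOf N) := rawW_inj (by rw [← hw1, ← hw2])
  have hlen : cfgs.length = cfgs'.length := by
    have := congrArg List.length hmap
    simpa using this
  refine ⟨hlen, ?_⟩
  intro k hk hk'
  have hone : rawOf N (cfgs[k]'hk) = rawOf N (cfgs'[k]'hk') := by
    have h1 := List.getElem_map (rawOf N) (l := cfgs) (h := by simpa using hk)
    have h2 := List.getElem_map (rawOf N) (l := cfgs') (h := by simpa using hk')
    rw [← h1, ← h2]
    congr 1
  exact rawOf_determines N (hh1 _ (List.getElem_mem _)) (hh2 _ (List.getElem_mem _)) hone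

end Master


section Final

variable {Q : Type} (q0 qf : Q) (t : List Bool) (N : ℕ)

lemma head?_getElem {α : Type*} {l : List α} {c : α} (h : l.head? = some c) :
    ∃ h0 : 0 < l.length, l[0]'h0 = c := by
  cases l with
  | nil => simp at h
  | cons a l =>
    simp only [List.head?_cons, Option.some.injEq] at h
    exact ⟨by simp, h⟩

lemma getLast?_getElem {α : Type*} {l : List α} {c : α} (h : l.getLast? = some c) :
    ∃ hl : l.length - 1 < l.length, l[l.length - 1]'hl = c := by
  rw [List.getLast?_eq_getElem?] at h
  obtain ⟨hlt, hc⟩ := List.getElem?_eq_some_iff.mp h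
  exact ⟨hlt, hc⟩

lemma notGood_iff (ht : t.length ≤ 2^N) (w : List (Sym Q)) :
    ((¬ IsWFSeq N w) ∨
      (∃ (cfgs : List (TMConfig Q)) (c : TMConfig Q),
          SeqVia N w cfgs ∧ cfgs.head? = some c ∧ c.state ≠ q0) ∨
      (∃ (cfgs : List (TMConfig Q)) (c : TMConfig Q),
          SeqVia N w cfgs ∧ cfgs.head? = some c ∧ ¬ InitializedWith t N c) ∨
      (∃ (cfgs : List (TMConfig Q)) (c : TMConfig Q),
          SeqVia N w cfgs ∧ cfgs.getLast? = some c ∧ c.state ≠ qf)) ↔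
    ¬ Good q0 qf t N w := by
  constructor
  · intro hbad hGood
    obtain ⟨cfgsG, hviaG, ⟨c0, hc0, hq0, hI⟩, ⟨clG, hclG, hqfG⟩⟩ := hGood
    obtain ⟨h00, hg0⟩ := head?_getElem hc0
    obtain ⟨hl0, hgl⟩ := getLast?_getElem hclG
    rcases hbad with hnwf | ⟨cfgs, c, hvia, hc, hne⟩ | ⟨cfgs, c, hvia, hc, hnI⟩ |
      ⟨cfgs, c, hvia, hc, hne⟩
    · exact hnwf ⟨cfgsG, hviaG⟩
    · obtain ⟨hlen, hpt⟩ := seqVia_unique N hvia hviaG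
      obtain ⟨h01, hg1⟩ := head?_getElem hc
      obtain ⟨hs, -, -⟩ := hpt 0 h01 h00
      rw [hg1, hg0] at hs
      exact hne (hs.trans hq0)
    · obtain ⟨hlen, hpt⟩ := seqVia_unique N hvia hviaG
      obtain ⟨h01, hg1⟩ := head?_getElem hc
      obtain ⟨hs, hh, hcc⟩ := hpt 0 h01 h00
      rw [hg1, hg0] at hh hcc
      apply hnI
      refine ⟨hh.trans hI.1, ?_, ?_⟩
      · intro i hi
        rw [hcc i (by omega)]
        exact hI.2.1 i hi
      · intro i hi1 hi2
        rw [hcc i hi2]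
        exact hI.2.2 i hi1 hi2
    · obtain ⟨hlen, hpt⟩ := seqVia_unique N hvia hviaG
      obtain ⟨h01, hg1⟩ := getLast?_getElem hc
      obtain ⟨hs, -, -⟩ := hpt (cfgs.length - 1) h01 (by omega)
      rw [hg1] at hs
      have hidx : cfgsG[cfgs.length - 1]'(by omega) = cfgsG[cfgsG.length - 1]'hl0 := by
        congr 1
        omega
      rw [hidx, hgl] at hs
      exact hne (hs.trans hqfG)
  · intro hnG
    by_cases hwf : IsWFSeq N w
    · obtain ⟨cfgs, hvia⟩ := hwf
      have hne : cfgs ≠ [] := hvia.1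
      obtain ⟨c0, hc0⟩ : ∃ c0, cfgs.head? = some c0 := by
        cases cfgs with
        | nil => exact absurd rfl hne
        | cons a l => exact ⟨a, rfl⟩
      obtain ⟨cl, hcl⟩ : ∃ cl, cfgs.getLast? = some cl :=
        Option.isSome_iff_exists.mp (List.getLast?_isSome.mpr hne)
      by_cases h1 : c0.state = q0
      · by_cases h2 : InitializedWith t N c0
        · by_cases h3 : cl.state = qf
          · exact absurd ⟨cfgs, hvia, ⟨c0, hc0, h1, h2⟩, ⟨cl, hcl, h3⟩⟩ hnG
          · exact Or.inr (Or.inr (Or.inr ⟨cfgs, cl, hvia, hcl, h3⟩))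
        · exact Or.inr (Or.inr (Or.inl ⟨cfgs, c0, hvia, hc0, h2⟩))
      · exact Or.inr (Or.inl ⟨cfgs, c0, hvia, hc0, h1⟩)
    · exact Or.inl hwf

end Final

section NFAC

instance : Fintype CSub :=
  ⟨⟨{CSub.pre, CSub.post, CSub.fin}, by decide⟩, fun x => by cases x <;> decide⟩

lemma card_CSub : Fintype.card CSub = 3 := rfl

variable {Q : Type} (N n : ℕ)

def stEmbed : St Q N n →
    Fin 7 × Bool × Bool × Option Q × Fin (n+2) × Bool × Bool × Bool × Bool × Bool ×
      Fin (N+1) × CSub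
  | .dead => (⟨0, by omega⟩, false, false, none, 0, false, false, false, false, false, 0, .pre)
  | .init => (⟨1, by omega⟩, false, false, none, 0, false, false, false, false, false, 0, .pre)
  | .done => (⟨2, by omega⟩, false, false, none, 0, false, false, false, false, false, 0, .pre)
  | .boc f lq => (⟨3, by omega⟩, f, false, lq, 0, false, false, false, false, false, 0, .pre)
  | .addr f lq cnt sn pb pa pos b alb ala =>
      (⟨4, by omega⟩, f, sn, lq, cnt, pb, pa, b, alb, ala, pos, .pre)
  | .cell f lq cnt sn sub b ala top =>
      (⟨5, by omega⟩, f, sn, lq, cnt, b, ala, top, false, false, 0, sub)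
  | .eob f lq cnt sn b ala top =>
      (⟨6, by omega⟩, f, sn, lq, cnt, b, ala, top, false, false, 0, .pre)

lemma stEmbed_inj : Function.Injective (stEmbed (Q := Q) N n) := by
  intro a b h
  cases a <;> cases b <;> simp_all [stEmbed]

noncomputable instance stFintype [Fintype Q] : Fintype (St Q N n) :=
  letI := Classical.decEq Q
  Fintype.ofInjective (stEmbed N n) (stEmbed_inj N n)

lemma card_St [Fintype Q] :
    Fintype.card (St Q N n) ≤ 2688 * (Fintype.card Q + 1) * (n + 2) * (N + 1) := by
  classical
  have h := Fintype.card_le_of_injective (stEmbed (Q := Q) N n) (stEmbed_inj N n)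
  calc Fintype.card (St Q N n) ≤ _ := h
    _ ≤ 2688 * (Fintype.card Q + 1) * (n + 2) * (N + 1) := by
        simp only [Fintype.card_prod, Fintype.card_bool, Fintype.card_option,
          Fintype.card_fin, card_CSub]
        ring_nf
        omega

end NFAC


section TheNFA

variable {Q : Type} (q0 qf : Q) (t : List Bool) (N : ℕ)

noncomputable def theNFA : NFA (Sym Q) (Fin N × St Q N t.length) where
  step := fun p a => {(p.1, step q0 qf t N p.1.val p.2 a)}
  start := {p | p.2 = St.init}
  accept := {p | p.2 ≠ St.done}

lemma theNFA_evalFrom (w : List (Sym Q)) :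
    ∀ g : Fin N → St Q N t.length,
      (theNFA q0 qf t N).evalFrom {p | p.2 = g p.1} w =
        {p | p.2 = w.foldl (step q0 qf t N p.1.val) (g p.1)} := by
  induction w with
  | nil => intro g; rfl
  | cons a w ih =>
    intro g
    show (theNFA q0 qf t N).evalFrom ((theNFA q0 qf t N).stepSet {p | p.2 = g p.1} a) w = _
    have hstep : (theNFA q0 qf t N).stepSet {p | p.2 = g p.1} a =
        {p | p.2 = step q0 qf t N p.1.val (g p.1) a} := by
      ext p
      constructor
      · intro hp
        obtain ⟨r, hr, hpr⟩ := (theNFA q0 qf t N).mem_stepSet.mp hp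
        obtain ⟨j, s⟩ := r
        have hps : p = (j, step q0 qf t N j.val s a) := hpr
        have hs : s = g j := hr
        rw [hps, hs]
        rfl
      · intro hp
        refine (theNFA q0 qf t N).mem_stepSet.mpr ⟨(p.1, g p.1), rfl, ?_⟩
        exact Set.mem_singleton_iff.mpr (Prod.ext rfl hp)
    rw [hstep]
    exact ih (fun j => step q0 qf t N j.val (g j) a)

lemma theNFA_accepts (w : List (Sym Q)) :
    w ∈ (theNFA q0 qf t N).accepts ↔
      ∃ j : Fin N, w.foldl (step q0 qf t N j.val) St.init ≠ St.done := by
  rw [NFA.mem_accepts]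
  have heval := theNFA_evalFrom q0 qf t N w (fun _ => St.init)
  rw [show (theNFA q0 qf t N).start = {p | p.2 = (fun _ : Fin N => St.init) p.1} from rfl]
  rw [heval]
  constructor
  · rintro ⟨p, hacc, hev⟩
    refine ⟨p.1, ?_⟩
    rw [← hev]
    exact hacc
  · rintro ⟨j, hj⟩
    exact ⟨(j, w.foldl (step q0 qf t N j.val) St.init), hj, rfl⟩

end TheNFA

end NSC

/-- There is a polynomial `p` (independent of `Q`, `N`, `t`)
such that for all `N ≥ 1` and input `t` with `|t| ≤ 2^N` there is an NFA over
`Γ` with at most `p (N + |t| + |Q|)` states accepting exactly the words that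
are not a well-formed sequence of configurations, or whose first configuration
is not in state `q₀`, or whose first configuration is not initialized with `t`,
or whose last configuration is not in state `q_f`. -/
theorem not_seq_cfg_nfa :
    ∃ p : Polynomial ℕ,
      ∀ (Q : Type) (instQ : Fintype Q) (q0 qf : Q) (N : ℕ), 1 ≤ N →
        ∀ t : List Bool, t.length ≤ 2 ^ N →
          ∃ (σ : Type) (instσ : Fintype σ) (M : NFA (Sym Q) σ),
            @Fintype.card σ instσ ≤ p.eval (N + t.length + @Fintype.card Q instQ) ∧
            M.accepts = {w : List (Sym Q) |
              (¬ IsWFSeq N w) ∨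
              (∃ (cfgs : List (TMConfig Q)) (c : TMConfig Q),
                  SeqVia N w cfgs ∧ cfgs.head? = some c ∧ c.state ≠ q0) ∨
              (∃ (cfgs : List (TMConfig Q)) (c : TMConfig Q),
                  SeqVia N w cfgs ∧ cfgs.head? = some c ∧ ¬ InitializedWith t N c) ∨
              (∃ (cfgs : List (TMConfig Q)) (c : TMConfig Q),
                  SeqVia N w cfgs ∧ cfgs.getLast? = some c ∧ c.state ≠ qf)} := by
  refine ⟨Polynomial.C 2688 * (Polynomial.X + Polynomial.C 2)^4, ?_⟩
  intro Q instQ q0 qf N hN t ht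
  letI := instQ
  refine ⟨Fin N × NSC.St Q N t.length, inferInstance, NSC.theNFA q0 qf t N, ?_, ?_⟩
  · set m := N + t.length + Fintype.card Q with hm
    have hcard : Fintype.card (Fin N × NSC.St Q N t.length) =
        N * Fintype.card (NSC.St Q N t.length) := by
      rw [Fintype.card_prod, Fintype.card_fin]
    rw [hcard]
    have hSt := NSC.card_St (Q := Q) N t.length
    have heval : (Polynomial.C 2688 * (Polynomial.X + Polynomial.C 2)^4).eval m
        = 2688 * (m+2)^4 := by
      simp [Polynomial.eval_mul, Polynomial.eval_pow, Polynomial.eval_add]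
    rw [heval]
    have h1 : N ≤ m + 2 := by omega
    have h2 : Fintype.card Q + 1 ≤ m + 2 := by omega
    have h3 : t.length + 2 ≤ m + 2 := by omega
    have h4 : N + 1 ≤ m + 2 := by omega
    calc N * Fintype.card (NSC.St Q N t.length)
        ≤ N * (2688 * (Fintype.card Q + 1) * (t.length + 2) * (N + 1)) :=
          Nat.mul_le_mul_left _ hSt
      _ = 2688 * (N * ((Fintype.card Q + 1) * ((t.length + 2) * (N + 1)))) := by ring
      _ ≤ 2688 * ((m+2) * ((m+2) * ((m+2) * (m+2)))) := by
          refine Nat.mul_le_mul_left _ ?_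
          exact Nat.mul_le_mul h1 (Nat.mul_le_mul h2 (Nat.mul_le_mul h3 h4))
      _ = 2688 * (m+2)^4 := by ring
  · ext w
    rw [NSC.theNFA_accepts]
    have hG := NSC.master_iff q0 qf t N (by omega) ht w
    have hL := NSC.notGood_iff q0 qf t N ht w
    show _ ↔ w ∈ {w : List (Sym Q) | _}
    rw [Set.mem_setOf_eq]
    constructor
    · rintro ⟨j, hj⟩
      apply hL.mpr
      intro hGood
      exact hj (hG.mpr hGood j.val j.isLt)
    · intro hw
      by_contra hno
      push_neg at hno
      apply hL.mp hw
      apply hG.mp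
      intro j hj
      have := hno ⟨j, hj⟩
      simpa using this

end Paper
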